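/- arXiv:1407.7000 — 2 statements merged into one kernel-verified Lean document; each statement's English description precedes it below -/
import Mathlib

section
/- For a quadratic irrational a, the set of triples of Ostrowski representations \{ \rho_a(x) * \rho_a(y) * \rho_a(z) : x + y = z \} (with zero-padding to equal length) is recognizable by a finite automaton over the alphabet \Sigma_a^3. -/
/-- `l` is a (possibly zero-padded) Ostrowski digit string based on the continued
fraction digits `a`, written least-significant digit first: the digit at index `i`
is the coefficient `b_{i+1}` of `q_i`. -/
def OstValid (a : ℕ → ℕ) (l : List ℕ) : Prop :=
  l.getD 0 0 < a 1 ∧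
  (∀ i, l.getD i 0 ≤ a (i + 1)) ∧
  ∀ i, l.getD (i + 1) 0 = a (i + 2) → l.getD i 0 = 0

/-- The value represented by an Ostrowski digit string (least-significant first). -/
def OstVal (q : ℕ → ℕ) (l : List ℕ) : ℕ :=
  ∑ i ∈ Finset.range l.length, l.getD i 0 * q i

namespace OstP



/-- Alphabet of digit triples. -/
abbrev Alpha (c : ℕ) := Fin (2 * c + 2) × Fin (2 * c + 2) × Fin (2 * c + 2)

def Ebd (p K : ℕ) : ℕ := K + 2 * p

def Bbd (c : ℕ) : ℤ := 16 * c

abbrev IccT (c : ℕ) := {z : ℤ // z ∈ Finset.Icc (-(Bbd c)) (Bbd c)}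

abbrev PosT (p K : ℕ) := Fin (Ebd p K + 1) ⊕ Fin p

abbrev StT (p K c : ℕ) := PosT p K × IccT c × IccT c × (Bool × Bool × Bool)

noncomputable instance (p K c : ℕ) : Fintype (StT p K c) := by infer_instance
noncomputable instance (p K c : ℕ) : Fintype (Set (StT p K c)) := by infer_instance

def posVal (p K : ℕ) : PosT p K → ℕ → Prop
  | Sum.inl t => fun len => len = (t : ℕ)
  | Sum.inr j => fun len => Ebd p K < len ∧ (len - K) % p = (j : ℕ)

def aAt (a : ℕ → ℕ) (p K : ℕ) : PosT p K → ℕ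
  | Sum.inl t => a t
  | Sum.inr j => a (K + (j : ℕ))

def posStep (p K : ℕ) : PosT p K → PosT p K → Prop
  | Sum.inl t, Sum.inl t' => (t : ℕ) = (t' : ℕ) + 1
  | Sum.inr j, Sum.inl t' => (t' : ℕ) = Ebd p K ∧ (j : ℕ) = 1 % p
  | Sum.inr j, Sum.inr j' => (j : ℕ) = ((j' : ℕ) + 1) % p
  | Sum.inl _, Sum.inr _ => False

def posIsOne (p K : ℕ) : PosT p K → Prop
  | Sum.inl t => (t : ℕ) = 1
  | Sum.inr _ => False

def posIsZero (p K : ℕ) : PosT p K → Prop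
  | Sum.inl t => (t : ℕ) = 0
  | Sum.inr _ => False

section Per

variable {a : ℕ → ℕ} {p K : ℕ}

theorem aPeriod (hp : 1 ≤ p) (hper : ∀ k, K ≤ k → a (k + p) = a k) :
    ∀ d, a (K + d % p) = a (K + d) := by
  intro d
  induction d using Nat.strong_induction_on with
  | _ d ih =>
    rcases lt_or_ge d p with h | h
    · rw [Nat.mod_eq_of_lt h]
    · have h1 : d % p = (d - p) % p := (Nat.mod_eq_sub_mod h).symm ▸ rfl
      have h2 : a (K + d) = a (K + (d - p)) := by
        have : K + (d - p) + p = K + d := by omega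
        rw [← this]
        exact hper _ (by omega)
      rw [h2, ← ih (d - p) (by omega), Nat.mod_eq_sub_mod h]

theorem aAt_correct (hp : 1 ≤ p) (hper : ∀ k, K ≤ k → a (k + p) = a k)
    {pos : PosT p K} {len : ℕ} (h : posVal p K pos len) :
    aAt a p K pos = a len := by
  cases pos with
  | inl t => simp only [posVal] at h; simp [aAt, h]
  | inr j =>
    obtain ⟨h1, h2⟩ := h
    have hK : K ≤ len := by have := h1; unfold Ebd at this; omega
    simp only [aAt, ← h2]
    rw [aPeriod hp hper (len - K)]
    congr 1
    omega

theorem posStep_sound {pos pos' : PosT p K} {len : ℕ}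
    (hs : posStep p K pos pos') (hv : posVal p K pos' len) :
    posVal p K pos (len + 1) := by
  cases pos with
  | inl t =>
    cases pos' with
    | inl t' =>
      simp only [posStep] at hs
      simp only [posVal] at hv ⊢
      omega
    | inr j' => exact absurd hs id
  | inr j =>
    cases pos' with
    | inl t' =>
      simp only [posStep] at hs
      simp only [posVal] at hv ⊢
      obtain ⟨h1, h2⟩ := hs
      constructor
      · unfold Ebd at *; omega
      · have : len + 1 - K = 1 + 2 * p := by unfold Ebd at *; omega
        rw [this, h2, Nat.add_mul_mod_self_right]
    | inr j' =>
      simp only [posStep] at hs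
      simp only [posVal] at hv ⊢
      obtain ⟨h1, h2⟩ := hv
      constructor
      · omega
      · have hK : K ≤ len := by unfold Ebd at h1; omega
        have : len + 1 - K = (len - K) + 1 := by omega
        rw [this, hs, ← h2]
        conv_lhs => rw [Nat.add_mod]
        conv_rhs => rw [Nat.add_mod, Nat.mod_mod_of_dvd _ dvd_rfl]
end Per



section QLem
variable {a q : ℕ → ℕ}
variable (ha : ∀ k, 1 ≤ a (k + 1)) (hq0 : q 0 = 1) (hq1 : q 1 = a 1)
  (hq : ∀ k, q (k + 2) = a (k + 2) * q (k + 1) + q k)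

include ha hq0 hq1 hq

theorem q_pos : ∀ n, 0 < q n := by
  intro n
  induction n using Nat.strong_induction_on with
  | _ n ih =>
    match n with
    | 0 => omega
    | 1 => have h := ha 0; norm_num at h; omega
    | (k+2) =>
      have h1 := ih k (by omega)
      rw [hq k]; positivity

theorem q_mono : ∀ n, q n ≤ q (n + 1) := by
  intro n
  match n with
  | 0 => have h := ha 0; norm_num at h; simp only [Nat.zero_add]; omega
  | (k+1) =>
    rw [hq k]
    have h1 := ha (k+1)
    have h2 := q_pos ha hq0 hq1 hq (k+1)
    nlinarith

theorem q_step2 : ∀ n, q n + q (n + 1) ≤ q (n + 2) := by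
  intro n
  rw [hq n]
  have h1 := ha (n+1)
  have h2 := q_pos ha hq0 hq1 hq (n+1)
  nlinarith

theorem two_q : ∀ n, 2 * q n ≤ q (n + 2) := by
  intro n
  have := q_step2 ha hq0 hq1 hq n
  have := q_mono ha hq0 hq1 hq n
  omega

theorem sum_q : ∀ n, (∑ i ∈ Finset.range n, q i) ≤ 2 * q n := by
  intro n
  induction n using Nat.strong_induction_on with
  | _ n ih =>
    match n with
    | 0 => simp
    | 1 =>
      simp [Finset.sum_range_one, hq0]
      have := q_pos ha hq0 hq1 hq 1; omega
    | (k+2) =>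
      have ih' := ih k (by omega)
      have h1 : (∑ i ∈ Finset.range (k+2), q i)
          = (∑ i ∈ Finset.range k, q i) + q k + q (k+1) := by
        rw [Finset.sum_range_succ, Finset.sum_range_succ]
      have h2 := q_step2 ha hq0 hq1 hq k
      have h3 := q_mono ha hq0 hq1 hq k
      have h4 := q_mono ha hq0 hq1 hq (k+1)
      omega

end QLem



def adef (c : ℕ) : Alpha c := (⟨0, by omega⟩, ⟨0, by omega⟩, ⟨0, by omega⟩)

def xl (c : ℕ) (l : List (Alpha c)) : List ℕ := l.map fun t => (t.1 : ℕ)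
def yl (c : ℕ) (l : List (Alpha c)) : List ℕ := l.map fun t => (t.2.1 : ℕ)
def zl (c : ℕ) (l : List (Alpha c)) : List ℕ := l.map fun t => (t.2.2 : ℕ)

def dval (c : ℕ) (b : Alpha c) : ℤ :=
  ((b.2.2 : ℕ) : ℤ) - ((b.1 : ℕ) : ℤ) - ((b.2.1 : ℕ) : ℤ)

def lowSum (q : ℕ → ℕ) (c : ℕ) (l : List (Alpha c)) : ℤ :=
  ∑ i ∈ Finset.range l.length, dval c (l.getD i (adef c)) * (q i : ℤ)

/-- `qq q len` is `q (len - 1)` with the convention `qq q 0 = 0`. -/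
def qq (q : ℕ → ℕ) : ℕ → ℕ
  | 0 => 0
  | (len + 1) => q len

/-- Validity of a digit string `l` (LSD first), where `fl = true` records that the
digit just above the top of `l` forces the top digit of `l` to be `0`. -/
def VA (a : ℕ → ℕ) (fl : Bool) (l : List ℕ) : Prop :=
  (∀ i, l.getD i 0 ≤ a (i + 1)) ∧
  (∀ i, l.getD (i + 1) 0 = a (i + 2) → l.getD i 0 = 0) ∧
  (fl = true → l.getD (l.length - 1) 0 = 0) ∧
  (0 < l.length → l.getD 0 0 < a 1)

section Lemmas
variable {a q : ℕ → ℕ} {c : ℕ}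

theorem getD_map_lt (f : Alpha c → ℕ) (l : List (Alpha c)) {i : ℕ} (h : i < l.length) :
    (l.map f).getD i 0 = f (l.getD i (adef c)) := by
  rw [List.getD_eq_getElem _ _ (by simpa using h), List.getD_eq_getElem _ _ h,
    List.getElem_map]

theorem getD_map_ge (f : Alpha c → ℕ) (l : List (Alpha c)) {i : ℕ} (h : l.length ≤ i) :
    (l.map f).getD i 0 = 0 :=
  List.getD_eq_default _ _ (by simpa using h)

theorem lowSum_append (b : Alpha c) (l : List (Alpha c)) :
    lowSum q c (l ++ [b]) = lowSum q c l + dval c b * (q l.length : ℤ) := by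
  unfold lowSum
  rw [List.length_append, List.length_singleton, Finset.sum_range_succ]
  congr 1
  · apply Finset.sum_congr rfl
    intro i hi
    rw [Finset.mem_range] at hi
    rw [List.getD_append _ _ _ _ hi]
  · rw [List.getD_append_right _ _ _ _ (le_refl _), Nat.sub_self]
    rfl

theorem VA_nil (ha : ∀ k, 1 ≤ a (k + 1)) (fl : Bool) : VA a fl [] := by
  refine ⟨fun i => by simp, fun i h => ?_, fun _ => by simp, fun h => by simp at h⟩
  · exfalso; have h5 : 1 ≤ a (i + 2) := ha (i + 1); simp at h; omega

theorem VA_append (ha : ∀ k, 1 ≤ a (k + 1)) {l : List ℕ} {d : ℕ} {fl fl' : Bool}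
    (hVA : VA a fl' l)
    (hd : d ≤ a (l.length + 1))
    (hfl' : fl' = true ↔ d = a (l.length + 1))
    (hfl : fl = true → d = 0)
    (hbot : l.length = 0 → d < a 1) :
    VA a fl (l ++ [d]) := by
  obtain ⟨h1, h2, h3, h4⟩ := hVA
  have hget : ∀ i, (l ++ [d]).getD i 0 = if i < l.length then l.getD i 0
      else if i = l.length then d else 0 := by
    intro i
    rcases lt_or_ge i l.length with h | h
    · rw [List.getD_append _ _ _ _ h, if_pos h]
    · rw [List.getD_append_right _ _ _ _ h, if_neg (by omega)]
      rcases eq_or_lt_of_le h with h' | h'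
      · rw [if_pos h'.symm, ← h', Nat.sub_self]; rfl
      · rw [if_neg (by omega)]
        apply List.getD_eq_default
        simp; omega
  refine ⟨?_, ?_, ?_, ?_⟩
  · intro i
    rw [hget i]
    split_ifs with hi hi'
    · exact h1 i
    · subst hi'; exact hd
    · exact Nat.zero_le _
  · intro i hi
    rw [hget (i + 1)] at hi
    rw [hget i]
    split_ifs at hi with hia hib
    · -- i+1 < l.length
      rw [if_pos (by omega)]
      exact h2 i hi
    · -- i+1 = l.length
      have hl : 0 < l.length := by omega
      have : fl' = true := hfl'.mpr (by rw [← hib]; exact hi)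
      rw [if_pos (by omega)]
      have := h3 this
      have : l.getD (l.length - 1) 0 = 0 := this
      have hieq : i = l.length - 1 := by omega
      rw [hieq]; exact this
    · exfalso; have h5 : 1 ≤ a (i + 2) := ha (i + 1); omega
  · intro hfl2
    have := hfl hfl2
    rw [hget]
    simp only [List.length_append, List.length_singleton]
    rw [if_neg (by omega), if_pos (by omega)]
    exact this
  · intro _
    rw [hget 0]
    rcases Nat.eq_zero_or_pos l.length with h | h
    · rw [if_neg (by omega), if_pos (by omega)]
      exact hbot h
    · rw [if_pos h]
      exact h4 h

end Lemmas


open Set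

variable {α : Type*} {σ : Type*}

/-- Reverse of an NFA. -/
def revN (N : NFA α σ) : NFA α σ where
  step := fun s x => { t | s ∈ N.step t x }
  start := N.accept
  accept := N.start

theorem mem_evalFrom_iff (N : NFA α σ) :
    ∀ (u : List α) (S : Set σ) (f : σ),
      f ∈ N.evalFrom S u ↔ ∃ s ∈ S, f ∈ N.evalFrom {s} u := by
  intro u
  induction u with
  | nil => intro S f; simp [NFA.evalFrom]
  | cons b u' ih =>
    intro S f
    have hstep : ∀ (T : Set σ), N.evalFrom T (b :: u') = N.evalFrom (N.stepSet T b) u' := by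
      intro T; rfl
    rw [hstep, ih]
    constructor
    · rintro ⟨t, ht, hf⟩
      rw [NFA.mem_stepSet] at ht
      obtain ⟨s, hs, hts⟩ := ht
      refine ⟨s, hs, ?_⟩
      rw [hstep, ih]
      refine ⟨t, ?_, hf⟩
      rw [NFA.mem_stepSet]
      exact ⟨s, rfl, hts⟩
    · rintro ⟨s, hs, hf⟩
      rw [hstep, ih] at hf
      obtain ⟨t, ht, hf⟩ := hf
      rw [NFA.mem_stepSet] at ht
      obtain ⟨s', hs', hts⟩ := ht
      simp only [Set.mem_singleton_iff] at hs'
      rw [hs'] at hts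
      exact ⟨t, by rw [NFA.mem_stepSet]; exact ⟨s, hs, hts⟩, hf⟩

theorem revN_evalFrom (N : NFA α σ) :
    ∀ (u : List α) (s f : σ),
      f ∈ (revN N).evalFrom {s} u ↔ s ∈ N.evalFrom {f} u.reverse := by
  intro u
  induction u with
  | nil => intro s f; simp [NFA.evalFrom]; exact eq_comm
  | cons b u' ih =>
    intro s f
    have hstep : ∀ (M : NFA α σ) (T : Set σ), M.evalFrom T (b :: u') = M.evalFrom (M.stepSet T b) u' := by
      intro M T; rfl
    rw [hstep, mem_evalFrom_iff]
    constructor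
    · rintro ⟨t, ht, hf⟩
      rw [NFA.mem_stepSet] at ht
      obtain ⟨s', hs', hts⟩ := ht
      simp only [Set.mem_singleton_iff] at hs'
      rw [hs'] at hts
      have hstep2 : s ∈ N.step t b := hts
      rw [ih] at hf
      show s ∈ N.evalFrom {f} (b :: u').reverse
      rw [List.reverse_cons, NFA.evalFrom_append, NFA.evalFrom_singleton, NFA.mem_stepSet]
      exact ⟨t, hf, hstep2⟩
    · intro hs
      rw [List.reverse_cons, NFA.evalFrom_append, NFA.evalFrom_singleton, NFA.mem_stepSet] at hs
      obtain ⟨t, ht, hts⟩ := hs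
      refine ⟨t, ?_, ?_⟩
      · rw [NFA.mem_stepSet]
        exact ⟨s, rfl, hts⟩
      · rw [ih]
        exact ht

theorem revN_accepts (N : NFA α σ) (u : List α) :
    u ∈ (revN N).accepts ↔ u.reverse ∈ N.accepts := by
  rw [NFA.mem_accepts, NFA.mem_accepts]
  constructor
  · rintro ⟨f, hf, hev⟩
    rw [mem_evalFrom_iff] at hev
    obtain ⟨s, hs, hev⟩ := hev
    rw [revN_evalFrom] at hev
    refine ⟨s, hs, ?_⟩
    rw [mem_evalFrom_iff]
    exact ⟨f, hf, hev⟩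
  · rintro ⟨s, hs, hev⟩
    rw [mem_evalFrom_iff] at hev
    obtain ⟨f, hf, hev⟩ := hev
    refine ⟨f, hf, ?_⟩
    rw [mem_evalFrom_iff]
    refine ⟨s, hs, ?_⟩
    rw [revN_evalFrom]
    exact hev

theorem chain_accepts (N : NFA α σ) (v : List α) (st : ℕ → σ)
    (h0 : st 0 ∈ N.start)
    (hstep : ∀ t (ht : t < v.length), st (t + 1) ∈ N.step (st t) (v.get ⟨t, ht⟩))
    (hacc : st v.length ∈ N.accept) : v ∈ N.accepts := by
  have key : ∀ t, t ≤ v.length → st t ∈ N.evalFrom N.start (v.take t) := by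
    intro t
    induction t with
    | zero => intro _; simpa using h0
    | succ t iht =>
      intro ht
      have h1 : v.take (t + 1) = v.take t ++ [v.get ⟨t, by omega⟩] := by
        rw [List.take_succ]
        congr
        rw [List.getElem?_eq_getElem (by omega)]
        rfl
      rw [h1, NFA.evalFrom_append, NFA.evalFrom_singleton, NFA.mem_stepSet]
      exact ⟨st t, iht (by omega), hstep t (by omega)⟩
  rw [NFA.mem_accepts]
  refine ⟨st v.length, hacc, ?_⟩
  have := key v.length (le_refl _)
  rwa [List.take_length] at this


section Machine

/-- The MSD-first checking automaton. -/
def M (a : ℕ → ℕ) (p K c : ℕ) : NFA (Alpha c) (StT p K c) where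
  step := fun st b =>
    { t |
      posStep p K st.1 t.1 ∧
      t.2.2.2 = (decide ((b.1 : ℕ) = aAt a p K st.1),
                 decide ((b.2.1 : ℕ) = aAt a p K st.1),
                 decide ((b.2.2 : ℕ) = aAt a p K st.1)) ∧
      (b.1 : ℕ) ≤ aAt a p K st.1 ∧ (b.2.1 : ℕ) ≤ aAt a p K st.1 ∧
      (b.2.2 : ℕ) ≤ aAt a p K st.1 ∧
      (st.2.2.2.1 = true → (b.1 : ℕ) = 0) ∧
      (st.2.2.2.2.1 = true → (b.2.1 : ℕ) = 0) ∧
      (st.2.2.2.2.2 = true → (b.2.2 : ℕ) = 0) ∧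
      (posIsOne p K st.1 → ((b.1 : ℕ) < a 1 ∧ (b.2.1 : ℕ) < a 1 ∧ (b.2.2 : ℕ) < a 1)) ∧
      ((t.2.1 : ℤ) = (st.2.1 : ℤ) * (aAt a p K st.1 : ℤ) + (st.2.2.1 : ℤ) + dval c b) ∧
      ((t.2.2.1 : ℤ) = (st.2.1 : ℤ)) }
  start := { st | (st.2.1 : ℤ) = 0 ∧ (st.2.2.1 : ℤ) = 0 ∧ st.2.2.2 = (false, false, false) }
  accept := { st | posIsZero p K st.1 ∧ (st.2.1 : ℤ) = 0 }

/-- Semantics of a state with respect to the unread (low) part `u`. -/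
def SemS (a q : ℕ → ℕ) (p K c : ℕ) (st : StT p K c) (u : List (Alpha c)) : Prop :=
  posVal p K st.1 u.length ∧
  VA a st.2.2.2.1 (xl c u.reverse) ∧
  VA a st.2.2.2.2.1 (yl c u.reverse) ∧
  VA a st.2.2.2.2.2 (zl c u.reverse) ∧
  (st.2.1 : ℤ) * (q u.length : ℤ) + (st.2.2.1 : ℤ) * (qq q u.length : ℤ)
    + lowSum q c u.reverse = 0

theorem posVal_one_isOne {p K : ℕ} (hp : 1 ≤ p) {pos : PosT p K}
    (h : posVal p K pos 1) : posIsOne p K pos := by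
  cases pos with
  | inl t => simp only [posVal] at h; simp [posIsOne, ← h]
  | inr j => obtain ⟨h1, _⟩ := h; unfold Ebd at h1; omega

section Sound

variable {a q : ℕ → ℕ} {p K c : ℕ}
variable (ha : ∀ k, 1 ≤ a (k + 1)) (hq0 : q 0 = 1) (hq1 : q 1 = a 1)
  (hq : ∀ k, q (k + 2) = a (k + 2) * q (k + 1) + q k)
  (hp : 1 ≤ p) (hper : ∀ k, K ≤ k → a (k + p) = a k)

include ha hq0 hq1 hq hp hper

theorem sound : ∀ (u : List (Alpha c)) (st f : StT p K c),
    f ∈ (M a p K c).evalFrom {st} u → f ∈ (M a p K c).accept →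
    SemS a q p K c st u := by
  intro u
  induction u with
  | nil =>
    intro st f hev hacc
    simp only [NFA.evalFrom_nil, Set.mem_singleton_iff] at hev
    subst hev
    obtain ⟨hz, hr0⟩ := hacc
    refine ⟨?_, ?_, ?_, ?_, ?_⟩
    · cases h : f.1 with
      | inl t => rw [h] at hz; simp only [posIsZero] at hz; simp [posVal, hz]
      | inr j => rw [h] at hz; exact absurd hz id
    · simpa [xl] using VA_nil (a := a) ha _
    · simpa [yl] using VA_nil (a := a) ha _
    · simpa [zl] using VA_nil (a := a) ha _
    · simp only [List.length_nil, List.reverse_nil]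
      rw [hq0]
      simp only [qq, lowSum, List.length_nil, Finset.range_zero, Finset.sum_empty]
      push_cast
      rw [hr0]; ring
  | cons b u' ih =>
    intro st f hev hacc
    have hev' : f ∈ (M a p K c).evalFrom ((M a p K c).stepSet {st} b) u' := hev
    rw [mem_evalFrom_iff] at hev'
    obtain ⟨st', hst', hf⟩ := hev'
    rw [NFA.mem_stepSet] at hst'
    obtain ⟨s0, hs0, hstep⟩ := hst'
    simp only [Set.mem_singleton_iff] at hs0
    rw [hs0] at hstep
    have IH := ih st' f hf hacc
    obtain ⟨hpos', hVx, hVy, hVz, hsum⟩ := IH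
    obtain ⟨hposStep, hflags, hbx, hby, hbz, hfx, hfy, hfz, hone, hr', hs'⟩ := hstep
    have hlen : (b :: u').length = u'.length + 1 := rfl
    have hposv : posVal p K st.1 (u'.length + 1) := posStep_sound hposStep hpos'
    have haAt : aAt a p K st.1 = a (u'.length + 1) := aAt_correct hp hper hposv
    have hflx : st'.2.2.2.1 = decide ((b.1 : ℕ) = aAt a p K st.1) := by
      rw [hflags]
    have hfly : st'.2.2.2.2.1 = decide ((b.2.1 : ℕ) = aAt a p K st.1) := by
      rw [hflags]
    have hflz : st'.2.2.2.2.2 = decide ((b.2.2 : ℕ) = aAt a p K st.1) := by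
      rw [hflags]
    have hrev : (b :: u').reverse = u'.reverse ++ [b] := by simp
    have hlenrev : (u'.reverse).length = u'.length := by simp
    have hbot1 : u'.length = 0 → posIsOne p K st.1 := by
      intro h0
      apply posVal_one_isOne hp
      rwa [h0] at hposv
    refine ⟨hposv, ?_, ?_, ?_, ?_⟩
    · rw [hrev]
      show VA a st.2.2.2.1 (xl c (u'.reverse ++ [b]))
      have : xl c (u'.reverse ++ [b]) = xl c u'.reverse ++ [(b.1 : ℕ)] := by
        simp [xl]
      rw [this]
      apply VA_append ha (fl' := st'.2.2.2.1)
      · exact hVx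
      · rw [xl, List.length_map, hlenrev, ← haAt]; exact hbx
      · rw [hflx, xl, List.length_map, hlenrev, ← haAt]; simp
      · intro h; exact hfx h
      · intro h
        rw [xl, List.length_map, hlenrev] at h
        exact (hone (hbot1 h)).1
    · rw [hrev]
      have : yl c (u'.reverse ++ [b]) = yl c u'.reverse ++ [(b.2.1 : ℕ)] := by
        simp [yl]
      rw [this]
      apply VA_append ha (fl' := st'.2.2.2.2.1)
      · exact hVy
      · rw [yl, List.length_map, hlenrev, ← haAt]; exact hby
      · rw [hfly, yl, List.length_map, hlenrev, ← haAt]; simp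
      · intro h; exact hfy h
      · intro h
        rw [yl, List.length_map, hlenrev] at h
        exact (hone (hbot1 h)).2.1
    · rw [hrev]
      have : zl c (u'.reverse ++ [b]) = zl c u'.reverse ++ [(b.2.2 : ℕ)] := by
        simp [zl]
      rw [this]
      apply VA_append ha (fl' := st'.2.2.2.2.2)
      · exact hVz
      · rw [zl, List.length_map, hlenrev, ← haAt]; exact hbz
      · rw [hflz, zl, List.length_map, hlenrev, ← haAt]; simp
      · intro h; exact hfz h
      · intro h
        rw [zl, List.length_map, hlenrev] at h
        exact (hone (hbot1 h)).2.2
    · rw [hrev, hlen]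
      have hLS : lowSum q c (u'.reverse ++ [b])
          = lowSum q c u'.reverse + dval c b * (q u'.length : ℤ) := by
        rw [lowSum_append, hlenrev]
      rw [hLS]
      rw [haAt] at hr'
      cases hu : u'.length with
      | zero =>
        rw [hu] at hsum hr'
        rw [Nat.zero_add] at hr' ⊢
        have e1 : qq q 1 = q 0 := rfl
        have e0 : qq q 0 = 0 := rfl
        rw [e1, hq1, hq0]
        rw [e0, hq0] at hsum
        push_cast at hsum hr' hs' ⊢
        linear_combination hsum - hr'
      | succ k =>
        rw [hu] at hsum hr'
        have e2 : qq q (k + 1 + 1) = q (k + 1) := rfl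
        have e1 : qq q (k + 1) = q k := rfl
        rw [e1] at hsum
        rw [e2]
        have hQ : (q (k + 1 + 1) : ℤ) = (a (k + 1 + 1) : ℤ) * (q (k + 1) : ℤ) + (q k : ℤ) := by
          exact_mod_cast congrArg (Nat.cast : ℕ → ℤ) (hq k)
        rw [hQ]
        push_cast at hsum hr' hs' ⊢
        linear_combination hsum - (q (k+1) : ℤ) * hr' - (q k : ℤ) * hs'
end Sound
end Machine

section Encode

variable {p K c : ℕ}

def encodePos (p K : ℕ) (hp : 1 ≤ p) (len : ℕ) : PosT p K :=
  if h : len ≤ Ebd p K then Sum.inl ⟨len, by omega⟩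
  else Sum.inr ⟨(len - K) % p, Nat.mod_lt _ hp⟩

theorem posVal_encode (hp : 1 ≤ p) (len : ℕ) : posVal p K (encodePos p K hp len) len := by
  unfold encodePos
  split_ifs with h
  · simp [posVal]
  · exact ⟨by omega, rfl⟩

theorem posStep_encode (hp : 1 ≤ p) (len : ℕ) :
    posStep p K (encodePos p K hp (len + 1)) (encodePos p K hp len) := by
  unfold encodePos
  by_cases h1 : len + 1 ≤ Ebd p K
  · rw [dif_pos h1, dif_pos (by omega)]
    simp [posStep]
  · rw [dif_neg h1]
    by_cases h2 : len ≤ Ebd p K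
    · rw [dif_pos h2]
      refine ⟨by simp; omega, ?_⟩
      show (len + 1 - K) % p = 1 % p
      have he : len + 1 - K = 1 + p * 2 := by unfold Ebd at *; omega
      rw [he, Nat.add_mul_mod_self_left]
    · rw [dif_neg h2]
      show (len + 1 - K) % p = ((len - K) % p + 1) % p
      have hK : K ≤ len := by unfold Ebd at h2; omega
      have he : len + 1 - K = (len - K) + 1 := by omega
      rw [he]
      conv_lhs => rw [Nat.add_mod]
      conv_rhs => rw [Nat.add_mod, Nat.mod_mod_of_dvd _ dvd_rfl]

theorem posIsZero_encode (hp : 1 ≤ p) : posIsZero p K (encodePos p K hp 0) := by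
  unfold encodePos
  rw [dif_pos (by omega)]
  simp [posIsZero]

theorem posIsOne_encode (hp : 1 ≤ p) (len : ℕ)
    (h : posIsOne p K (encodePos p K hp len)) : len = 1 := by
  unfold encodePos at h
  split_ifs at h with h1
  · simpa [posIsOne] using h
  · exact absurd h id

end Encode

section Carry

/-- The carry pair recursion, reading positions `m-1, m-2, …, 0`. -/
def Fcar (a : ℕ → ℕ) (DD : ℕ → ℤ) (m : ℕ) : ℕ → ℤ × ℤ
  | 0 => (0, 0)
  | (t + 1) =>
    ((Fcar a DD m t).1 * (a (m - t) : ℤ) + (Fcar a DD m t).2 + DD (m - t - 1),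
     (Fcar a DD m t).1)

variable {a q : ℕ → ℕ} {c : ℕ} {DD : ℕ → ℤ} {m : ℕ}
variable (ha : ∀ k, 1 ≤ a (k + 1)) (hq0 : q 0 = 1) (hq1 : q 1 = a 1)
  (hq : ∀ k, q (k + 2) = a (k + 2) * q (k + 1) + q k)

include ha hq0 hq1 hq

theorem Fcar_identity (hLS : (∑ i ∈ Finset.range m, DD i * (q i : ℤ)) = 0) :
    ∀ t, t ≤ m →
      (Fcar a DD m t).1 * (q (m - t) : ℤ) + (Fcar a DD m t).2 * (qq q (m - t) : ℤ)
        + (∑ i ∈ Finset.range (m - t), DD i * (q i : ℤ)) = 0 := by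
  intro t
  induction t with
  | zero =>
    intro _
    simp only [Nat.sub_zero, Fcar]
    rw [hLS]
    ring
  | succ t iht =>
    intro ht
    have iht' := iht (by omega)
    have hmt : m - t = (m - (t + 1)) + 1 := by omega
    rw [hmt] at iht'
    rw [Finset.sum_range_succ] at iht'
    have hFsucc1 : (Fcar a DD m (t + 1)).1
        = (Fcar a DD m t).1 * (a ((m - (t + 1)) + 1) : ℤ) + (Fcar a DD m t).2
          + DD (m - (t + 1)) := by
      show (Fcar a DD m t).1 * (a (m - t) : ℤ) + (Fcar a DD m t).2 + DD (m - t - 1) = _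
      rw [hmt]
      norm_num
    have hFsucc2 : (Fcar a DD m (t + 1)).2 = (Fcar a DD m t).1 := rfl
    rw [hFsucc1, hFsucc2]
    by_cases h0 : m - (t + 1) = 0
    · rw [h0] at iht' ⊢
      rw [Nat.zero_add] at iht' ⊢
      rw [show qq q 1 = q 0 from rfl, hq0, hq1] at iht'
      rw [show qq q 0 = 0 from rfl, hq0]
      push_cast at iht' ⊢
      linear_combination iht'
    · obtain ⟨k, hk⟩ : ∃ k, m - (t + 1) = k + 1 := ⟨m - (t + 1) - 1, by omega⟩
      rw [hk] at iht' ⊢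
      rw [show qq q (k + 1 + 1) = q (k + 1) from rfl] at iht'
      rw [show qq q (k + 1) = q k from rfl]
      have hQ : (q (k + 1 + 1) : ℤ) = (a (k + 1 + 1) : ℤ) * (q (k + 1) : ℤ) + (q k : ℤ) := by
        exact_mod_cast congrArg (Nat.cast : ℕ → ℤ) (hq k)
      rw [hQ] at iht'
      push_cast at iht' ⊢
      linear_combination iht'

theorem Fcar_bound (hLS : (∑ i ∈ Finset.range m, DD i * (q i : ℤ)) = 0)
    (hDD : ∀ i, |DD i| ≤ 2 * (c : ℤ)) :
    ∀ t, t ≤ m → |(Fcar a DD m t).1| ≤ Bbd c := by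
  have hqpos : ∀ n, (0:ℤ) < (q n : ℤ) := by
    intro n; exact_mod_cast q_pos ha hq0 hq1 hq n
  have hqmono : ∀ n, (q n : ℤ) ≤ (q (n+1) : ℤ) := by
    intro n; exact_mod_cast q_mono ha hq0 hq1 hq n
  have hq2 : ∀ n, 2 * (q n : ℤ) ≤ (q (n+2) : ℤ) := by
    intro n; exact_mod_cast two_q ha hq0 hq1 hq n
  have hLSb : ∀ n, |∑ i ∈ Finset.range n, DD i * (q i : ℤ)| ≤ 4 * c * (q n : ℤ) := by
    intro n
    calc |∑ i ∈ Finset.range n, DD i * (q i : ℤ)|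
        ≤ ∑ i ∈ Finset.range n, |DD i * (q i : ℤ)| := Finset.abs_sum_le_sum_abs _ _
      _ ≤ ∑ i ∈ Finset.range n, 2 * (c:ℤ) * (q i : ℤ) := by
          apply Finset.sum_le_sum
          intro i _
          rw [abs_mul, abs_of_nonneg (le_of_lt (hqpos i))]
          exact mul_le_mul_of_nonneg_right (hDD i) (le_of_lt (hqpos i))
      _ = 2 * (c:ℤ) * (∑ i ∈ Finset.range n, (q i : ℤ)) := by rw [Finset.mul_sum]
      _ ≤ 2 * (c:ℤ) * (2 * (q n : ℤ)) := by
          apply mul_le_mul_of_nonneg_left _ (by positivity)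
          exact_mod_cast sum_q ha hq0 hq1 hq n
      _ = 4 * c * (q n : ℤ) := by ring
  -- the inequality coming from the identity
  have hineq : ∀ t, t ≤ m → 1 ≤ m - t →
      |(Fcar a DD m t).1| * (q (m - t) : ℤ)
        ≤ |(Fcar a DD m t).2| * (q (m - t - 1) : ℤ) + 4 * c * (q (m - t) : ℤ) := by
    intro t htm hn
    have hid := Fcar_identity ha hq0 hq1 hq hLS t htm
    set n := m - t with hndef
    obtain ⟨k, hk⟩ : ∃ k, n = k + 1 := ⟨n - 1, by omega⟩
    rw [hk] at hid ⊢
    have e1 : qq q (k + 1) = q k := rfl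
    rw [e1] at hid
    have h1 : (Fcar a DD m t).1 * (q (k+1) : ℤ)
        = -((Fcar a DD m t).2 * (q k : ℤ) + (∑ i ∈ Finset.range (k+1), DD i * (q i : ℤ))) := by
      linear_combination hid
    calc |(Fcar a DD m t).1| * (q (k+1) : ℤ)
        = |(Fcar a DD m t).1 * (q (k+1) : ℤ)| := by
          rw [abs_mul, abs_of_nonneg (le_of_lt (hqpos (k+1)))]
      _ = |(Fcar a DD m t).2 * (q k : ℤ) + (∑ i ∈ Finset.range (k+1), DD i * (q i : ℤ))| := by
          rw [h1, abs_neg]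
      _ ≤ |(Fcar a DD m t).2 * (q k : ℤ)| + |∑ i ∈ Finset.range (k+1), DD i * (q i : ℤ)| :=
          abs_add_le _ _
      _ ≤ |(Fcar a DD m t).2| * (q k : ℤ) + 4 * c * (q (k+1) : ℤ) := by
          rw [abs_mul, abs_of_nonneg (le_of_lt (hqpos k))]
          exact add_le_add le_rfl (hLSb (k+1))
      _ = |(Fcar a DD m t).2| * (q (k + 1 - 1) : ℤ) + 4 * c * (q (k+1) : ℤ) := by norm_num
  intro t
  induction t using Nat.strong_induction_on with
  | _ t ih =>
    intro htm
    match t, ih with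
    | 0, _ =>
      have h0 : (Fcar a DD m 0).1 = 0 := rfl
      rw [h0, abs_zero]; unfold Bbd; positivity
    | 1, _ =>
      have h1 : (Fcar a DD m 1).1 = DD (m - 1) := by
        show (Fcar a DD m 0).1 * (a (m - 0) : ℤ) + (Fcar a DD m 0).2 + DD (m - 0 - 1) = _
        simp [Fcar]
      rw [h1]
      have := hDD (m - 1)
      unfold Bbd
      have hc0 : (0:ℤ) ≤ (c:ℤ) := by positivity
      linarith
    | (t+2), ih =>
      rcases Nat.eq_zero_or_pos (m - (t+2)) with hzero | hpos
      · -- bottom position: the value is exactly 0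
        have hid := Fcar_identity ha hq0 hq1 hq hLS (t+2) htm
        rw [hzero] at hid
        have e0 : qq q 0 = 0 := rfl
        rw [e0, hq0] at hid
        simp only [Finset.range_zero, Finset.sum_empty, Nat.cast_zero, Nat.cast_one, mul_zero,
          add_zero, mul_one] at hid
        have : (Fcar a DD m (t+2)).1 = 0 := hid
        rw [this, abs_zero]; unfold Bbd; positivity
      · -- two-step estimate
        obtain ⟨k, hk⟩ : ∃ k, m - (t+2) = k + 1 := ⟨m - (t+2) - 1, by omega⟩
        have hm1 : m - (t+1) = k + 2 := by omega
        have i1 := hineq (t+2) htm (by omega)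
        have i2 := hineq (t+1) (by omega) (by omega)
        rw [hk] at i1
        rw [hm1] at i2
        rw [show k + 1 - 1 = k from rfl] at i1
        rw [show k + 2 - 1 = k + 1 from rfl] at i2
        have hIH : |(Fcar a DD m t).1| ≤ Bbd c := ih t (by omega) (by omega)
        have h21 : (Fcar a DD m (t+2)).2 = (Fcar a DD m (t+1)).1 := rfl
        have h22 : (Fcar a DD m (t+1)).2 = (Fcar a DD m t).1 := rfl
        rw [h21] at i1
        rw [h22] at i2
        have qpk := hqpos k
        have qp1 := hqpos (k+1)
        have qp2 := hqpos (k+2)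
        have hmono := hqmono k
        have h2q := hq2 k
        have e1 := mul_le_mul_of_nonneg_right i1 (le_of_lt qp2)
        have e2 := mul_le_mul_of_nonneg_right i2 (le_of_lt qpk)
        have hBnn : (0:ℤ) ≤ |(Fcar a DD m (t+1)).1| := abs_nonneg _
        have hAnn : (0:ℤ) ≤ |(Fcar a DD m (t+2)).1| := abs_nonneg _
        have hCnn : (0:ℤ) ≤ |(Fcar a DD m t).1| := abs_nonneg _
        have hcnn : (0:ℤ) ≤ (c:ℤ) := Int.ofNat_nonneg c
        unfold Bbd at hIH ⊢
        -- combine: A * q(k+1) * q(k+2) ≤ 16c * q(k+1) * q(k+2)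
        have key : |(Fcar a DD m (t+2)).1| * ((q (k+1) : ℤ) * (q (k+2) : ℤ))
            ≤ 16 * (c:ℤ) * ((q (k+1) : ℤ) * (q (k+2) : ℤ)) := by
          nlinarith [e1, e2, hIH, h2q, hmono, qpk, qp1, qp2, hBnn, hCnn, hcnn,
            mul_le_mul_of_nonneg_right hIH (mul_nonneg (le_of_lt qp1) (le_of_lt qpk)),
            mul_le_mul_of_nonneg_left h2q (mul_nonneg (by linarith : (0:ℤ) ≤ 8 * (c:ℤ)) (le_of_lt qp1)),
            mul_le_mul_of_nonneg_left hmono (mul_nonneg (by linarith : (0:ℤ) ≤ 4 * (c:ℤ)) (le_of_lt qp2))]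
        have hpos : (0:ℤ) < (q (k+1) : ℤ) * (q (k+2) : ℤ) := mul_pos qp1 qp2
        exact le_of_mul_le_mul_right key hpos
end Carry

section Complete

variable {a q : ℕ → ℕ} {p K c : ℕ}
variable (ha : ∀ k, 1 ≤ a (k + 1)) (hq0 : q 0 = 1) (hq1 : q 1 = a 1)
  (hq : ∀ k, q (k + 2) = a (k + 2) * q (k + 1) + q k)
  (hp : 1 ≤ p) (hper : ∀ k, K ≤ k → a (k + p) = a k)
  (hc : ∀ k, a (k + 1) ≤ c)

theorem xl_getD (w : List (Alpha c)) {n : ℕ} (h : n < w.length) :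
    (xl c w).getD n 0 = ((w.getD n (adef c)).1 : ℕ) := getD_map_lt _ _ h

theorem yl_getD (w : List (Alpha c)) {n : ℕ} (h : n < w.length) :
    (yl c w).getD n 0 = ((w.getD n (adef c)).2.1 : ℕ) := getD_map_lt _ _ h

theorem zl_getD (w : List (Alpha c)) {n : ℕ} (h : n < w.length) :
    (zl c w).getD n 0 = ((w.getD n (adef c)).2.2 : ℕ) := getD_map_lt _ _ h

include ha hq0 hq1 hq hp hper hc

theorem complete (w : List (Alpha c))
    (hVx : VA a false (xl c w)) (hVy : VA a false (yl c w)) (hVz : VA a false (zl c w))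
    (hS : lowSum q c w = 0) :
    w.reverse ∈ (M a p K c).accepts := by
  classical
  obtain ⟨m, hm⟩ : ∃ m, w.length = m := ⟨_, rfl⟩
  obtain ⟨DD, hDDdef⟩ : ∃ DD : ℕ → ℤ,
      ∀ i, DD i = ((zl c w).getD i 0 : ℤ) - ((xl c w).getD i 0 : ℤ)
        - ((yl c w).getD i 0 : ℤ) := ⟨_, fun i => rfl⟩
  -- the sum is zero
  have hS' : (∑ i ∈ Finset.range m, DD i * (q i : ℤ)) = 0 := by
    rw [← hS]
    unfold lowSum
    rw [hm]
    apply Finset.sum_congr rfl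
    intro i hi
    rw [Finset.mem_range] at hi
    have hi' : i < w.length := by omega
    rw [hDDdef i, xl_getD w hi', yl_getD w hi', zl_getD w hi']
    unfold dval
    ring
  -- digit bounds
  have hxc : ∀ i, (xl c w).getD i 0 ≤ c := fun i => le_trans (hVx.1 i) (hc i)
  have hyc : ∀ i, (yl c w).getD i 0 ≤ c := fun i => le_trans (hVy.1 i) (hc i)
  have hzc : ∀ i, (zl c w).getD i 0 ≤ c := fun i => le_trans (hVz.1 i) (hc i)
  have hDD : ∀ i, |DD i| ≤ 2 * (c : ℤ) := by
    intro i
    rw [hDDdef i, abs_le]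
    have h1 := hxc i; have h2 := hyc i; have h3 := hzc i
    constructor
    · push_cast; omega
    · push_cast; omega
  have hbound := Fcar_bound ha hq0 hq1 hq hS' hDD
  have hbound2 : ∀ t, t ≤ m → |(Fcar a DD m t).2| ≤ Bbd c := by
    intro t htm
    match t with
    | 0 =>
      have h0 : (Fcar a DD m 0).2 = 0 := rfl
      rw [h0, abs_zero]; unfold Bbd; positivity
    | (t+1) =>
      have h0 : (Fcar a DD m (t+1)).2 = (Fcar a DD m t).1 := rfl
      rw [h0]; exact hbound t (by omega)
  -- the run's components
  obtain ⟨rF, hrF⟩ : ∃ rF : ℕ → IccT c, ∀ t, t ≤ m → (rF t : ℤ) = (Fcar a DD m t).1 := by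
    refine ⟨fun t => dite (t ≤ m)
      (fun h => (⟨(Fcar a DD m t).1, Finset.mem_Icc.mpr (abs_le.mp (hbound t h))⟩ : IccT c))
      (fun _ => ⟨0, Finset.mem_Icc.mpr (by unfold Bbd; omega)⟩), fun t ht => ?_⟩
    simp only [dif_pos ht]
  obtain ⟨sF, hsF⟩ : ∃ sF : ℕ → IccT c, ∀ t, t ≤ m → (sF t : ℤ) = (Fcar a DD m t).2 := by
    refine ⟨fun t => dite (t ≤ m)
      (fun h => (⟨(Fcar a DD m t).2, Finset.mem_Icc.mpr (abs_le.mp (hbound2 t h))⟩ : IccT c))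
      (fun _ => ⟨0, Finset.mem_Icc.mpr (by unfold Bbd; omega)⟩), fun t ht => ?_⟩
    simp only [dif_pos ht]
  obtain ⟨flg, hflg0, hflgS⟩ : ∃ flg : ℕ → Bool × Bool × Bool,
      flg 0 = (false, false, false) ∧
      ∀ t, flg (t + 1) =
        (decide ((xl c w).getD (m - (t+1)) 0 = a (m - (t+1) + 1)),
         decide ((yl c w).getD (m - (t+1)) 0 = a (m - (t+1) + 1)),
         decide ((zl c w).getD (m - (t+1)) 0 = a (m - (t+1) + 1))) := by
    refine ⟨fun t => Nat.casesOn t (false, false, false) (fun t' =>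
        (decide ((xl c w).getD (m - (t'+1)) 0 = a (m - (t'+1) + 1)),
         decide ((yl c w).getD (m - (t'+1)) 0 = a (m - (t'+1) + 1)),
         decide ((zl c w).getD (m - (t'+1)) 0 = a (m - (t'+1) + 1)))), rfl, fun t => rfl⟩
  have hFm : (Fcar a DD m m).1 = 0 := by
    have hid := Fcar_identity ha hq0 hq1 hq hS' m le_rfl
    rw [Nat.sub_self] at hid
    rw [show qq q 0 = 0 from rfl, hq0] at hid
    simp only [Finset.range_zero, Finset.sum_empty, Nat.cast_zero, Nat.cast_one, mul_zero,
      add_zero, mul_one] at hid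
    exact hid
  -- apply the chain lemma
  apply chain_accepts (M a p K c) w.reverse
    (fun t => (encodePos p K hp (m - t), rF t, sF t, flg t))
  · -- start
    refine ⟨?_, ?_, ?_⟩
    · show ((rF 0 : ℤ) = 0)
      rw [hrF 0 (by omega)]; rfl
    · show ((sF 0 : ℤ) = 0)
      rw [hsF 0 (by omega)]; rfl
    · exact hflg0
  · -- steps
    intro t ht
    have htm : t < m := by
      have := List.length_reverse (as := w)
      omega
    obtain ⟨n, hn⟩ : ∃ n, m - 1 - t = n := ⟨_, rfl⟩
    have h1 : m - t = n + 1 := by omega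
    have h2 : m - (t + 1) = n := by omega
    have hnm : n < w.length := by omega
    have hbget : (w.reverse.get ⟨t, ht⟩) = w.getD n (adef c) := by
      rw [List.get_eq_getElem, List.getElem_reverse, List.getD_eq_getElem _ _ hnm]
      simp only [show w.length - 1 - t = n from by omega]
    have hpv : posVal p K (encodePos p K hp (m - t)) (m - t) := posVal_encode hp _
    have haAt : aAt a p K (encodePos p K hp (m - t)) = a (n + 1) := by
      rw [aAt_correct hp hper hpv, h1]
    refine ⟨?_, ?_, ?_, ?_, ?_, ?_, ?_, ?_, ?_, ?_, ?_⟩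
    · -- posStep
      show posStep p K (encodePos p K hp (m - t)) (encodePos p K hp (m - (t + 1)))
      rw [h1, h2]
      exact posStep_encode hp n
    · -- flags
      show flg (t + 1) = _
      rw [hflgS t, haAt, hbget, h2]
      rw [xl_getD w hnm, yl_getD w hnm, zl_getD w hnm]
    · -- x digit bound
      rw [hbget, ← xl_getD w hnm, haAt]
      exact hVx.1 n
    · rw [hbget, ← yl_getD w hnm, haAt]
      exact hVy.1 n
    · rw [hbget, ← zl_getD w hnm, haAt]
      exact hVz.1 n
    · -- x flag condition
      show (flg t).1 = true → _
      match t with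
      | 0 => rw [hflg0]; intro h; exact absurd h (by simp)
      | (t' + 1) =>
        rw [hflgS t']
        intro hfl
        simp only [decide_eq_true_eq] at hfl
        rw [hbget, ← xl_getD w hnm]
        apply hVx.2.1 n
        have hidx : m - (t' + 1) = n + 1 := by omega
        rw [hidx] at hfl
        exact hfl
    · show (flg t).2.1 = true → _
      match t with
      | 0 => rw [hflg0]; intro h; exact absurd h (by simp)
      | (t' + 1) =>
        rw [hflgS t']
        intro hfl
        simp only [decide_eq_true_eq] at hfl
        rw [hbget, ← yl_getD w hnm]
        apply hVy.2.1 n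
        have hidx : m - (t' + 1) = n + 1 := by omega
        rw [hidx] at hfl
        exact hfl
    · show (flg t).2.2 = true → _
      match t with
      | 0 => rw [hflg0]; intro h; exact absurd h (by simp)
      | (t' + 1) =>
        rw [hflgS t']
        intro hfl
        simp only [decide_eq_true_eq] at hfl
        rw [hbget, ← zl_getD w hnm]
        apply hVz.2.1 n
        have hidx : m - (t' + 1) = n + 1 := by omega
        rw [hidx] at hfl
        exact hfl
    · -- posIsOne
      intro hone
      have := posIsOne_encode hp _ hone
      have hn0 : n = 0 := by omega
      rw [hbget, hn0]
      rw [← xl_getD w (by omega), ← yl_getD w (by omega), ← zl_getD w (by omega)]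
      have hlen : 0 < (xl c w).length := by unfold xl; simp; omega
      have hleny : 0 < (yl c w).length := by unfold yl; simp; omega
      have hlenz : 0 < (zl c w).length := by unfold zl; simp; omega
      exact ⟨hVx.2.2.2 hlen, hVy.2.2.2 hleny, hVz.2.2.2 hlenz⟩
    · -- r equation
      show ((rF (t+1) : ℤ)) = (rF t : ℤ) * (aAt a p K (encodePos p K hp (m - t)) : ℤ)
        + (sF t : ℤ) + dval c (w.reverse.get ⟨t, ht⟩)
      rw [hrF (t+1) (by omega), hrF t (by omega), hsF t (by omega), haAt, hbget]
      have hstep : (Fcar a DD m (t+1)).1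
          = (Fcar a DD m t).1 * (a (m - t) : ℤ) + (Fcar a DD m t).2 + DD (m - t - 1) := rfl
      rw [hstep, h1]
      have hmt1 : n + 1 - 1 = n := by omega
      rw [hmt1]
      have hdd : DD n = dval c (w.getD n (adef c)) := by
        rw [hDDdef n, xl_getD w hnm, yl_getD w hnm, zl_getD w hnm]
        unfold dval
        ring
      rw [hdd]
    · -- s equation
      show ((sF (t+1) : ℤ)) = (rF t : ℤ)
      rw [hsF (t+1) (by omega), hrF t (by omega)]
      rfl
  · -- accept
    have hlen : w.reverse.length = m := by rw [List.length_reverse]; exact hm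
    rw [hlen]
    refine ⟨?_, ?_⟩
    · show posIsZero p K (encodePos p K hp (m - m))
      rw [Nat.sub_self]
      exact posIsZero_encode hp
    · show ((rF m : ℤ) = 0)
      rw [hrF m le_rfl]
      exact hFm

end Complete

section Main

variable {a q : ℕ → ℕ} {p K c : ℕ}
variable (ha : ∀ k, 1 ≤ a (k + 1)) (hq0 : q 0 = 1) (hq1 : q 1 = a 1)
  (hq : ∀ k, q (k + 2) = a (k + 2) * q (k + 1) + q k)
  (hp : 1 ≤ p) (hper : ∀ k, K ≤ k → a (k + p) = a k)
  (hc : ∀ k, a (k + 1) ≤ c)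

include ha hq0 hq1 hq hp hper hc in
theorem M_iff (v : List (Alpha c)) :
    v ∈ (M a p K c).accepts ↔
      (VA a false (xl c v.reverse) ∧ VA a false (yl c v.reverse) ∧
        VA a false (zl c v.reverse) ∧ lowSum q c v.reverse = 0) := by
  constructor
  · intro hacc
    rw [NFA.mem_accepts] at hacc
    obtain ⟨f, hf, hev⟩ := hacc
    rw [mem_evalFrom_iff] at hev
    obtain ⟨s, hsst, hev⟩ := hev
    have hsem := sound ha hq0 hq1 hq hp hper v s f hev hf
    obtain ⟨_, hVx, hVy, hVz, hsum⟩ := hsem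
    obtain ⟨hr0, hs0, hfl⟩ := hsst
    have hflx : s.2.2.2.1 = false := by rw [hfl]
    have hfly : s.2.2.2.2.1 = false := by rw [hfl]
    have hflz : s.2.2.2.2.2 = false := by rw [hfl]
    rw [hflx] at hVx; rw [hfly] at hVy; rw [hflz] at hVz
    refine ⟨hVx, hVy, hVz, ?_⟩
    rw [hr0, hs0] at hsum
    linarith [hsum]
  · rintro ⟨h1, h2, h3, h4⟩
    have := complete ha hq0 hq1 hq hp hper hc v.reverse h1 h2 h3 h4
    rwa [List.reverse_reverse] at this

theorem VA_iff_OstValid (l : List ℕ) (ha : ∀ k, 1 ≤ a (k + 1)) :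
    VA a false l ↔ OstValid a l := by
  constructor
  · rintro ⟨h1, h2, _, h4⟩
    refine ⟨?_, h1, h2⟩
    rcases Nat.eq_zero_or_pos l.length with h | h
    · have hz : l.getD 0 0 = 0 := List.getD_eq_default _ _ (by omega)
      rw [hz]; exact ha 0
    · exact h4 h
  · rintro ⟨h1, h2, h3⟩
    exact ⟨h2, h3, by simp, fun _ => h1⟩

theorem lowSum_eq_ostVal (w : List (Alpha c)) :
    lowSum q c w = (OstVal q (zl c w) : ℤ) - (OstVal q (xl c w) : ℤ)
      - (OstVal q (yl c w) : ℤ) := by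
  unfold lowSum OstVal
  have hlx : (xl c w).length = w.length := List.length_map _
  have hly : (yl c w).length = w.length := List.length_map _
  have hlz : (zl c w).length = w.length := List.length_map _
  rw [hlx, hly, hlz]
  push_cast
  rw [← Finset.sum_sub_distrib, ← Finset.sum_sub_distrib]
  apply Finset.sum_congr rfl
  intro i hi
  rw [Finset.mem_range] at hi
  rw [xl_getD w hi, yl_getD w hi, zl_getD w hi]
  unfold dval
  ring

end Main

end OstP

/-- (Theorem B of the paper.) For a quadratic irrational `a`,
i.e. one whose continued fraction digit sequence `(a_k)` is eventually periodic
(with all digits positive and bounded by `μ ≤ c`), the set of convolutions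
`ρ_a(x) * ρ_a(y) * ρ_a(z)` of zero-padded Ostrowski representations of triples
with `x + y = z` is recognizable by a finite automaton over the alphabet
`Σ_a³ = {0, …, 2c+1}³`. -/
theorem ostrowski_addition_recognizable
    (a q : ℕ → ℕ)
    (ha : ∀ k, 1 ≤ a (k + 1))
    (hq0 : q 0 = 1) (hq1 : q 1 = a 1)
    (hq : ∀ k, q (k + 2) = a (k + 2) * q (k + 1) + q k)
    -- `a` is quadratic: its continued fraction is eventually periodic
    (p K : ℕ) (hp : 1 ≤ p) (hper : ∀ k, K ≤ k → a (k + p) = a k)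
    -- `c` bounds the continued fraction digits (so `Σ_a ⊆ {0, …, 2c+1}`)
    (c : ℕ) (hc : ∀ k, a (k + 1) ≤ c) :
    ∃ (σ : Type) (_ : Fintype σ)
      (A : DFA (Fin (2 * c + 2) × Fin (2 * c + 2) × Fin (2 * c + 2)) σ),
      ∀ w : List (Fin (2 * c + 2) × Fin (2 * c + 2) × Fin (2 * c + 2)),
        w ∈ A.accepts ↔
          (OstValid a (w.map fun t => (t.1 : ℕ)) ∧
           OstValid a (w.map fun t => (t.2.1 : ℕ)) ∧
           OstValid a (w.map fun t => (t.2.2 : ℕ)) ∧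
           OstVal q (w.map fun t => (t.1 : ℕ)) + OstVal q (w.map fun t => (t.2.1 : ℕ))
             = OstVal q (w.map fun t => (t.2.2 : ℕ))) := by
  classical
  refine ⟨Set (OstP.StT p K c), inferInstance, (OstP.revN (OstP.M a p K c)).toDFA, ?_⟩
  intro w
  rw [NFA.toDFA_correct]
  rw [OstP.revN_accepts]
  rw [OstP.M_iff ha hq0 hq1 hq hp hper hc]
  rw [List.reverse_reverse]
  rw [OstP.VA_iff_OstValid _ ha, OstP.VA_iff_OstValid _ ha, OstP.VA_iff_OstValid _ ha]
  constructor
  · rintro ⟨h1, h2, h3, h4⟩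
    refine ⟨h1, h2, h3, ?_⟩
    have := OstP.lowSum_eq_ostVal (q := q) (c := c) w
    rw [h4] at this
    have h5 : (OstVal q (OstP.xl c w) : ℤ) + (OstVal q (OstP.yl c w) : ℤ)
        = (OstVal q (OstP.zl c w) : ℤ) := by linarith
    exact_mod_cast h5
  · rintro ⟨h1, h2, h3, h4⟩
    refine ⟨h1, h2, h3, ?_⟩
    rw [OstP.lowSum_eq_ostVal]
    have h5 : (OstVal q (OstP.xl c w) : ℤ) + (OstVal q (OstP.yl c w) : ℤ)
        = (OstVal q (OstP.zl c w) : ℤ) := by exact_mod_cast h4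
    linarith
end

section
/- For each j with 1 \le j \le m, the relation \epsilon_j(x, y), asserting that x = q_k for some k and the coefficient of q_k in the Ostrowski representation of y equals j, is first-order definable in the structure (\mathbb{N}, +, V_a). -/
open FirstOrder

/-- The first-order language of `(ℕ, +, V_a)`: one binary function symbol (`+`)
and one unary function symbol (`V_a`). -/
def addVLanguage : Language where
  Functions := fun n =>
    match n with
    | 1 => Unit
    | 2 => Unit
    | _ => Empty
  Relations := fun _ => Empty

/-- The structure `(ℕ, +, V)` for the language `addVLanguage`. -/
def addVStructure (V : ℕ → ℕ) : addVLanguage.Structure ℕ where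
  funMap {n} f v :=
    match n, f, v with
    | 1, _, v => V (v 0)
    | 2, _, v => v 0 + v 1
  RelMap {n} r _ := nomatch r

/-- `b` is the (finitely supported) Ostrowski digit string of `N` based on `a`,
with associated denominator sequence `q`. -/
def IsOstRep (a q : ℕ → ℕ) (b : ℕ → ℕ) (N : ℕ) : Prop :=
  (∃ n, ∀ k, n < k → b k = 0) ∧
  b 0 = 0 ∧
  b 1 < a 1 ∧
  (∀ k, b (k + 1) ≤ a (k + 1)) ∧
  (∀ k, b (k + 2) = a (k + 2) → b (k + 1) = 0) ∧
  ∑ᶠ k, b (k + 1) * q k = N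

namespace OstAux

/-- validity of a digit string (without support/sum conditions) -/
def ValidStr (a : ℕ → ℕ) (b : ℕ → ℕ) : Prop :=
  b 0 = 0 ∧ b 1 < a 1 ∧ (∀ k, b (k + 1) ≤ a (k + 1)) ∧
    (∀ k, b (k + 2) = a (k + 2) → b (k + 1) = 0)

section qlem
variable {a q : ℕ → ℕ}
variable (ha : ∀ k, 1 ≤ a (k + 1)) (hq0 : q 0 = 1) (hq1 : q 1 = a 1)
  (hq : ∀ k, q (k + 2) = a (k + 2) * q (k + 1) + q k)
include ha hq0 hq1 hq

lemma q_pos : ∀ k, 1 ≤ q k := by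
  intro k
  induction k using Nat.strong_induction_on with
  | _ k ih =>
    match k with
    | 0 => omega
    | 1 => rw [hq1]; exact ha 0
    | (m+2) =>
      have h1 := ih m (by omega)
      rw [hq m]; omega

lemma q_le_succ : ∀ k, q k ≤ q (k + 1) := by
  intro k
  match k with
  | 0 => rw [hq0, hq1]; exact ha 0
  | (m+1) =>
    have h1 := q_pos ha hq0 hq1 hq m
    have h2 := q_pos ha hq0 hq1 hq (m+1)
    have := ha (m+1)
    rw [hq m]
    nlinarith

lemma q_mono : Monotone q :=
  monotone_nat_of_le_succ (q_le_succ ha hq0 hq1 hq)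

lemma q_succ_lt : ∀ k, q (k + 1) < q (k + 2) := by
  intro k
  have h1 := q_pos ha hq0 hq1 hq k
  have h2 := q_pos ha hq0 hq1 hq (k+1)
  have := ha (k+1)
  rw [hq k]
  nlinarith

lemma q_ge_id : ∀ k, k + 1 ≤ q (k + 1) := by
  intro k
  induction k with
  | zero => rw [hq1]; exact ha 0
  | succ m ih =>
    have h2 := q_succ_lt ha hq0 hq1 hq m
    rw [show m+1+1 = m+2 from rfl]
    omega

lemma q_unbounded (N : ℕ) : ∃ m, N < q m := by
  refine ⟨N + 2, ?_⟩
  have h2 := q_ge_id ha hq0 hq1 hq (N + 1)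
  rw [show N+1+1 = N+2 from rfl] at h2
  omega

lemma q_ge_id' : ∀ k, k ≤ q k := by
  intro k
  match k with
  | 0 => omega
  | (m+1) => exact q_ge_id ha hq0 hq1 hq m

/-- the fundamental upper bound: any valid digit string truncated below `k` sums to `< q k`. -/
lemma sum_lt (b : ℕ → ℕ) (hb : ValidStr a b) :
    ∀ k, ∑ i ∈ Finset.range k, b (i + 1) * q i < q k := by
  obtain ⟨hb0, hb1, hble, hbc⟩ := hb
  intro k
  induction k using Nat.strong_induction_on with
  | _ k ih =>
    match k with
    | 0 => simpa [hq0] using Nat.zero_lt_one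
    | 1 => simpa [hq0, hq1] using hb1
    | (m+2) =>
      rw [Finset.sum_range_succ]
      rcases eq_or_lt_of_le (hble (m+1)) with heq | hlt <;>
        rw [show m+1+1 = m+2 from rfl] at *
      · -- top digit maximal: b(m+2)=a(m+2) hence b(m+1)=0
        have hbm1 : b (m + 1) = 0 := hbc m heq
        have hsum : ∑ i ∈ Finset.range (m+1), b (i+1) * q i
            = ∑ i ∈ Finset.range m, b (i+1) * q i := by
          rw [Finset.sum_range_succ, hbm1]; ring
        have h1 := ih m (by omega)
        rw [hsum, heq, hq m]
        omega
      · have h1 := ih (m+1) (by omega)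
        have h2 := q_pos ha hq0 hq1 hq m
        have h3 := q_pos ha hq0 hq1 hq (m+1)
        rw [hq m]
        nlinarith

lemma finsum_eq_range (b : ℕ → ℕ) (n : ℕ) (hb : ∀ k, n ≤ k → b (k + 1) = 0) :
    ∑ᶠ k, b (k + 1) * q k = ∑ i ∈ Finset.range n, b (i + 1) * q i := by
  apply finsum_eq_finset_sum_of_support_subset
  intro x hx
  simp only [Function.mem_support, ne_eq] at hx
  simp only [Finset.coe_range, Set.mem_Iio]
  by_contra hxn
  exact hx (by rw [hb x (by omega)]; ring)

/-- existence of greedy Ostrowski representations -/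
lemma exists_rep : ∀ N : ℕ, ∃ b, ValidStr a b ∧
    (∀ m, N < q m → ∀ i, m ≤ i → b (i + 1) = 0) ∧ ∑ᶠ k, b (k + 1) * q k = N := by
  intro N
  induction N using Nat.strong_induction_on with
  | _ N ih =>
    rcases Nat.eq_zero_or_pos N with hN0 | hN
    · refine ⟨fun _ => 0, ⟨rfl, ha 0, fun _ => Nat.zero_le _, fun _ _ => rfl⟩,
        fun _ _ _ _ => rfl, ?_⟩
      rw [hN0]
      simp
    · -- greedy step
      have hP0 : q 0 ≤ N := by rw [hq0]; omega
      set k := Nat.findGreatest (fun k => q k ≤ N) N with hkdef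
      have hk : q k ≤ N := Nat.findGreatest_spec (P := fun k => q k ≤ N) (Nat.zero_le N) hP0
      have hkmax : N < q (k + 1) := by
        by_contra hcon
        push_neg at hcon
        have hkN : k + 1 ≤ N := le_trans (q_ge_id ha hq0 hq1 hq k) hcon
        exact Nat.findGreatest_is_greatest (Nat.lt_succ_self k) hkN hcon
      have hqk_pos := q_pos ha hq0 hq1 hq k
      set d := N / q k with hd
      set r := N % q k with hr
      have hdr : d * q k + r = N := by rw [hd, hr, Nat.mul_comm]; exact Nat.div_add_mod N (q k)
      have hrk : r < q k := Nat.mod_lt _ hqk_pos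
      have hrN : r < N := lt_of_lt_of_le hrk hk
      obtain ⟨br, hbrv, hbrs, hbrsum⟩ := ih r hrN
      have hbrk : ∀ i, k ≤ i → br (i + 1) = 0 := hbrs k hrk
      obtain ⟨hv0, hv1, hvle, hvc⟩ := hbrv
      -- bound on the top digit
      have hdle : d ≤ a (k + 1) := by
        rcases Nat.eq_zero_or_pos k with hk0 | hkpos
        · have h2 : d = N := by rw [hd, hk0, hq0, Nat.div_one]
          have h3 : q (k + 1) = a 1 := by rw [hk0]; exact hq1
          have h4 : a (k + 1) = a 1 := by rw [hk0]
          omega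
        · obtain ⟨m, hm⟩ := Nat.exists_eq_add_of_le hkpos
          have hm' : k = m + 1 := by omega
          have h1 : q (k + 1) = a (k + 1) * q k + q m := by rw [hm']; exact hq m
          have hdq : d * q k ≤ N := by omega
          by_contra hcon
          push_neg at hcon
          have h2 : (a (k + 1) + 1) * q k ≤ d * q k := Nat.mul_le_mul_right _ (by omega)
          have hqm : q m ≤ q k := by rw [hm']; exact q_le_succ ha hq0 hq1 hq m
          nlinarith
      -- if top digit is maximal, the remainder is small
      have hdmax : d = a (k + 1) → ∀ i, k ≤ i + 1 → br (i + 1) = 0 := by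
        intro hdeq i hi
        rcases Nat.eq_zero_or_pos k with hk0 | hkpos
        · exact hbrk i (by omega)
        · obtain ⟨m, hm⟩ := Nat.exists_eq_add_of_le hkpos
          have hm' : k = m + 1 := by omega
          have h1 : q (k + 1) = a (k + 1) * q k + q m := by rw [hm']; exact hq m
          have hrq : r < q m := by nlinarith
          rcases Nat.lt_or_ge i k with hik | hik
          · exact hbrs m hrq i (by omega)
          · exact hbrk i hik
      set bb : ℕ → ℕ := fun i => if i = k + 1 then d else br i with hbb
      have happ : ∀ i, bb i = if i = k + 1 then d else br i := fun _ => rfl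
      have hbb_high : ∀ i, k + 1 ≤ i → bb (i + 1) = 0 := by
        intro i hi
        rw [happ, if_neg (by omega)]
        exact hbrk i (by omega)
      have hbb_low : ∀ i, i < k → bb (i + 1) = br (i + 1) := by
        intro i hi
        rw [happ, if_neg (by omega)]
      have hbbk : bb (k + 1) = d := by rw [happ, if_pos rfl]
      refine ⟨bb, ⟨?_, ?_, ?_, ?_⟩, ?_, ?_⟩
      · rw [happ, if_neg (by omega), hv0]
      · rcases Nat.eq_zero_or_pos k with hk0 | hkpos
        · have h1 : bb 1 = d := by rw [happ, if_pos (by omega)]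
          rw [h1]
          have h2 : d = N := by rw [hd, hk0, hq0, Nat.div_one]
          have h3 : q (k + 1) = a 1 := by rw [hk0]; exact hq1
          omega
        · rw [happ, if_neg (by omega)]; exact hv1
      · intro i
        rcases eq_or_ne i k with hik | hik
        · rw [hik, hbbk]; exact hdle
        · rcases Nat.lt_or_ge i k with h | h
          · rw [hbb_low i h]; exact hvle i
          · rcases Nat.lt_or_ge i (k + 1) with h2 | h2
            · omega
            · rw [hbb_high i h2]; exact Nat.zero_le _
      · intro i hcc
        rcases eq_or_ne (i + 1) (k + 1) with hik | hik
        · -- b (i+2) is above the top digit, so zero ≠ a (i+2)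
          exfalso
          have h1 : bb (i + 2) = 0 := hbb_high (i + 1) (by omega)
          have h2 := ha (i + 1)
          rw [show i + 1 + 1 = i + 2 from rfl] at h2
          omega
        · rcases eq_or_ne (i + 2) (k + 1) with hik2 | hik2
          · -- top digit maximal
            have h1 : bb (i + 2) = d := by rw [happ, if_pos hik2]
            rw [h1] at hcc
            have h2 : d = a (k + 1) := by rw [← hik2]; exact hcc
            rw [happ, if_neg hik]
            exact hdmax h2 i (by omega)
          · have h1 : bb (i + 2) = br (i + 2) := by rw [happ, if_neg hik2]
            rw [h1] at hcc
            rw [happ, if_neg hik]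
            exact hvc i hcc
      · -- support
        intro m hm i hi
        have hmk : k < m := by
          by_contra hcon
          push_neg at hcon
          exact absurd (le_trans (q_mono ha hq0 hq1 hq hcon) hk) (by omega)
        exact hbb_high i (by omega)
      · -- sum
        rw [finsum_eq_range ha hq0 hq1 hq _ (k + 1) hbb_high]
        rw [Finset.sum_range_succ, hbbk]
        calc ∑ i ∈ Finset.range k, bb (i + 1) * q i + d * q k
            = ∑ i ∈ Finset.range k, br (i + 1) * q i + d * q k := by
              congr 1
              refine Finset.sum_congr rfl fun i hi => ?_
              rw [Finset.mem_range] at hi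
              rw [hbb_low i hi]
          _ = r + d * q k := by
              rw [← finsum_eq_range ha hq0 hq1 hq br k hbrk, hbrsum]
          _ = N := by omega

lemma mk_isOstRep (b : ℕ → ℕ) (N : ℕ) (hv : ValidStr a b) (n : ℕ)
    (hsupp : ∀ i, n ≤ i → b (i + 1) = 0) (hsum : ∑ᶠ k, b (k + 1) * q k = N) :
    IsOstRep a q b N := by
  refine ⟨⟨n, fun k hk => ?_⟩, hv.1, hv.2.1, hv.2.2.1, hv.2.2.2, hsum⟩
  match k, hk with
  | (i+1), hk => exact hsupp i (by omega)

lemma isOstRep_valid {b : ℕ → ℕ} {N : ℕ} (h : IsOstRep a q b N) : ValidStr a b :=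
  ⟨h.2.1, h.2.2.1, h.2.2.2.1, h.2.2.2.2.1⟩

lemma isOstRep_supp {b : ℕ → ℕ} {N : ℕ} (h : IsOstRep a q b N) :
    ∃ n, ∀ i, n ≤ i → b (i + 1) = 0 := by
  obtain ⟨n, hn⟩ := h.1
  exact ⟨n, fun i hi => hn (i + 1) (by omega)⟩

lemma exists_isOstRep (N : ℕ) : ∃ b, IsOstRep a q b N ∧
    (∀ m, N < q m → ∀ i, m ≤ i → b (i + 1) = 0) := by
  obtain ⟨b, hv, hsupp, hsum⟩ := exists_rep ha hq0 hq1 hq N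
  obtain ⟨m0, hm0⟩ := q_unbounded ha hq0 hq1 hq N
  exact ⟨b, mk_isOstRep ha hq0 hq1 hq b N hv m0 (hsupp m0 hm0) hsum, hsupp⟩

lemma least_digit {b : ℕ → ℕ} {N : ℕ} (h : IsOstRep a q b N) (hN : 1 ≤ N) :
    ∃ k, b (k + 1) ≠ 0 ∧ ∀ i, i < k → b (i + 1) = 0 := by
  have hex : ∃ k, b (k + 1) ≠ 0 := by
    by_contra hcon
    push_neg at hcon
    have : ∑ᶠ k, b (k + 1) * q k = 0 := by
      rw [finsum_eq_range ha hq0 hq1 hq b 0 (fun i _ => hcon i)]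
      simp
    rw [h.2.2.2.2.2] at this
    omega
  classical
  refine ⟨Nat.find hex, Nat.find_spec hex, fun i hi => ?_⟩
  by_contra hcon
  have hle : Nat.find hex ≤ i := Nat.find_le hcon
  omega

end qlem

section vlem
variable {a q V : ℕ → ℕ}
variable (ha : ∀ k, 1 ≤ a (k + 1)) (hq0 : q 0 = 1) (hq1 : q 1 = a 1)
  (hq : ∀ k, q (k + 2) = a (k + 2) * q (k + 1) + q k)
  (hV0 : V 0 = 1)
  (hV : ∀ N b k, IsOstRep a q b N → 0 < b (k + 1) → (∀ i, i < k → b (i + 1) = 0) →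
      V N = q k)
include ha hq0 hq1 hq hV0 hV

lemma V_val (N : ℕ) (hN : 1 ≤ N) : ∃ k, V N = q k ∧ q k ≤ N := by
  obtain ⟨b, hrep, _⟩ := exists_isOstRep ha hq0 hq1 hq N
  obtain ⟨k, hk1, hk2⟩ := least_digit ha hq0 hq1 hq hrep hN
  refine ⟨k, hV N b k hrep (by omega) hk2, ?_⟩
  -- q k ≤ N since digit k is nonzero
  obtain ⟨n, hn⟩ := isOstRep_supp ha hq0 hq1 hq hrep
  have hkn : k < n := by
    by_contra hcon
    exact hk1 (hn k (by omega))
  have := hrep.2.2.2.2.2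
  rw [finsum_eq_range ha hq0 hq1 hq b n hn] at this
  calc q k ≤ b (k + 1) * q k := Nat.le_mul_of_pos_left _ (by omega)
    _ ≤ ∑ i ∈ Finset.range n, b (i + 1) * q i :=
        Finset.single_le_sum (f := fun i => b (i + 1) * q i) (fun _ _ => Nat.zero_le _)
          (Finset.mem_range.mpr hkn)
    _ = N := this

lemma V_mem_range (s : ℕ) : ∃ k, V s = q k := by
  rcases Nat.eq_zero_or_pos s with h | h
  · exact ⟨0, by rw [h, hV0, hq0]⟩
  · obtain ⟨k, hk, _⟩ := V_val ha hq0 hq1 hq hV0 hV s h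
    exact ⟨k, hk⟩

lemma V_qk (k : ℕ) (hk : 1 ≤ k) : V (q k) = q k := by
  set b : ℕ → ℕ := fun i => if i = k + 1 then 1 else 0 with hb
  have happ : ∀ i, b i = if i = k + 1 then 1 else 0 := fun _ => rfl
  have hrep : IsOstRep a q b (q k) := by
    refine mk_isOstRep ha hq0 hq1 hq b (q k) ⟨?_, ?_, ?_, ?_⟩ (k + 1) ?_ ?_
    · rw [happ, if_neg (by omega)]
    · rw [happ, if_neg (by omega)]; exact ha 0
    · intro i
      rcases eq_or_ne (i + 1) (k + 1) with h | h
      · rw [happ, if_pos h]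
        have := ha i
        omega
      · rw [happ, if_neg h]; exact Nat.zero_le _
    · intro i hcc
      rcases eq_or_ne (i + 1) (k + 1) with h | h
      · rw [happ, if_neg (by omega)] at hcc
        have := ha (i + 1)
        rw [show i + 1 + 1 = i + 2 from rfl] at this
        omega
      · rw [happ, if_neg h]
    · intro i hi
      rw [happ, if_neg (by omega)]
    · rw [finsum_eq_range ha hq0 hq1 hq b (k + 1) (fun i hi => by rw [happ, if_neg (by omega)])]
      rw [Finset.sum_range_succ]
      have h1 : ∀ i ∈ Finset.range k, b (i + 1) * q i = 0 := by
        intro i hi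
        rw [Finset.mem_range] at hi
        rw [happ, if_neg (by omega)]
        ring
      rw [Finset.sum_congr rfl h1, happ, if_pos rfl]
      simp
  refine hV (q k) b k hrep ?_ ?_
  · rw [happ, if_pos rfl]; omega
  · intro i hi
    rw [happ, if_neg (by omega)]

lemma range_V_iff (x : ℕ) : (∃ s, V s = x) ↔ ∃ k, q k = x := by
  constructor
  · rintro ⟨s, rfl⟩
    obtain ⟨k, hk⟩ := V_mem_range ha hq0 hq1 hq hV0 hV s
    exact ⟨k, hk.symm⟩
  · rintro ⟨k, rfl⟩
    rcases Nat.eq_zero_or_pos k with h | h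
    · exact ⟨0, by rw [hV0, h, hq0]⟩
    · exact ⟨q k, V_qk ha hq0 hq1 hq hV0 hV k h⟩

end vlem

section sums

lemma finsum_add3 {f g h : ℕ → ℕ} (hf : (Function.support f).Finite)
    (hg : (Function.support g).Finite) (hh : (Function.support h).Finite) :
    ∑ᶠ i, (f i + (g i + h i)) = (∑ᶠ i, f i) + ((∑ᶠ i, g i) + (∑ᶠ i, h i)) := by
  have hgh : (Function.support fun i => g i + h i).Finite := by
    refine (hg.union hh).subset ?_
    intro i hi
    simp only [Function.mem_support, ne_eq] at hi
    simp only [Set.mem_union, Function.mem_support, ne_eq]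
    omega
  rw [finsum_add_distrib hf hgh, finsum_add_distrib hg hh]

lemma finsum_delta (k : ℕ) (c : ℕ → ℕ) :
    ∑ᶠ i, (if i = k then c i else 0) = c k := by
  rw [finsum_eq_single _ k (fun x hx => if_neg hx), if_pos rfl]

lemma delta_supp_fin (k : ℕ) (c : ℕ → ℕ) :
    (Function.support fun i => if i = k then c i else 0).Finite := by
  refine (Set.finite_singleton k).subset ?_
  intro i hi
  simp only [Function.mem_support, ne_eq] at hi
  simp only [Set.mem_singleton_iff]
  by_contra h
  rw [if_neg h] at hi
  exact hi rfl

end sums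

section glue
variable {a q : ℕ → ℕ}
variable (ha : ∀ k, 1 ≤ a (k + 1)) (hq0 : q 0 = 1) (hq1 : q 1 = a 1)
  (hq : ∀ k, q (k + 2) = a (k + 2) * q (k + 1) + q k)
include ha hq0 hq1 hq

lemma supp_fin (f : ℕ → ℕ) (n : ℕ) (hf : ∀ i, n ≤ i → f (i + 1) = 0) :
    (Function.support fun i => f (i + 1) * q i).Finite := by
  refine (Set.finite_Iio n).subset ?_
  intro i hi
  simp only [Function.mem_support, ne_eq] at hi
  simp only [Set.mem_Iio]
  by_contra h
  exact hi (by rw [hf i (by omega)]; ring)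

lemma glue (κ j z t : ℕ) (hj : 1 ≤ j)
    (bz ch : ℕ → ℕ)
    (hbzv : ValidStr a bz)
    (hbz_supp : ∀ m, z < q m → ∀ i, m ≤ i → bz (i + 1) = 0)
    (hbz_sum : ∑ᶠ i, bz (i + 1) * q i = z)
    (hz : z < q κ)
    (hzj : z + j * q κ < q (κ + 1))
    (hch_low : ∀ i, i ≤ κ → ch (i + 1) = 0)
    (hch_le : ∀ k, ch (k + 1) ≤ a (k + 1))
    (hch_c : ∀ k, ch (k + 2) = a (k + 2) → ch (k + 1) = 0)
    (hch_top : ch (κ + 2) ≠ a (κ + 2))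
    (hch_supp : ∃ n, ∀ i, n ≤ i → ch (i + 1) = 0)
    (hch_sum : ∑ᶠ i, ch (i + 1) * q i = t) :
    IsOstRep a q (fun i => if i = κ + 1 then j else if i ≤ κ then bz i else ch i)
      (z + j * q κ + t) := by
  obtain ⟨hbz0, hbz1, hbzle, hbzc⟩ := hbzv
  obtain ⟨nch, hnch⟩ := hch_supp
  set B : ℕ → ℕ := fun i => if i = κ + 1 then j else if i ≤ κ then bz i else ch i with hB
  have happ : ∀ i, B i = if i = κ + 1 then j else if i ≤ κ then bz i else ch i := fun _ => rfl
  have hBat : B (κ + 1) = j := by rw [happ, if_pos rfl]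
  have hBlow : ∀ i, i < κ → B (i + 1) = bz (i + 1) := by
    intro i hi
    rw [happ, if_neg (by omega), if_pos (by omega)]
  have hBhigh : ∀ i, κ < i → B (i + 1) = ch (i + 1) := by
    intro i hi
    rw [happ, if_neg (by omega), if_neg (by omega)]
  have hbz_hi : ∀ i, κ ≤ i → bz (i + 1) = 0 := hbz_supp κ hz
  have hq1' : q (0 + 1) = a 1 := hq1
  refine mk_isOstRep ha hq0 hq1 hq B _ ⟨?_, ?_, ?_, ?_⟩ (max nch (κ + 2)) ?_ ?_
  · rw [happ, if_neg (by omega), if_pos (by omega)]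
    exact hbz0
  · rcases Nat.eq_zero_or_pos κ with hk0 | hkpos
    · have h1 : B 1 = j := by rw [happ, if_pos (by omega)]
      subst hk0
      rw [hq0] at hzj
      rw [hq1'] at hzj
      omega
    · rw [happ, if_neg (by omega), if_pos (by omega)]
      exact hbz1
  · intro i
    rcases eq_or_ne i κ with rfl | hik
    · rw [hBat]
      rcases Nat.eq_zero_or_pos i with hk0 | hkpos
      · subst hk0
        rw [hq0] at hzj
        rw [hq1'] at hzj
        have hA : a (0 + 1) = a 1 := rfl
        rw [hA]
        omega
      · obtain ⟨m, hm⟩ := Nat.exists_eq_add_of_le hkpos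
        have hm' : i = m + 1 := by omega
        have h1 : q (i + 1) = a (i + 1) * q i + q m := by rw [hm']; exact hq m
        have hqm : q m ≤ q i := by
          rw [hm']; exact q_le_succ ha hq0 hq1 hq m
        by_contra hcon
        push_neg at hcon
        have h2 : (a (i + 1) + 1) * q i ≤ j * q i := Nat.mul_le_mul_right _ (by omega)
        nlinarith
    · rcases Nat.lt_or_ge i κ with h | h
      · rw [hBlow i h]; exact hbzle i
      · rw [hBhigh i (by omega)]; exact hch_le i
  · intro i hcc
    rcases eq_or_ne (i + 1) (κ + 1) with hik | hik
    · exfalso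
      have h1 : B (i + 2) = ch (i + 2) := hBhigh (i + 1) (by omega)
      rw [h1] at hcc
      have : i + 2 = κ + 2 := by omega
      rw [this] at hcc
      exact hch_top hcc
    · rcases eq_or_ne (i + 2) (κ + 1) with hik2 | hik2
      · -- j is the digit at κ = i+1, premise j = a (κ+1)
        have hκ : κ = i + 1 := by omega
        have h1 : B (i + 2) = j := by rw [show i + 2 = κ + 1 from by omega]; exact hBat
        rw [h1] at hcc
        have h2 : q (κ + 1) = a (κ + 1) * q κ + q i := by rw [hκ]; exact hq i
        have h3 : a (i + 2) = a (κ + 1) := by rw [hκ]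
        have hzq : z < q i := by nlinarith [hcc, h3]
        rw [hBlow i (by omega)]
        exact hbz_supp i hzq i (le_refl i)
      · rcases Nat.lt_or_ge (i + 2) (κ + 1) with h | h
        · rw [hBlow (i + 1) (by omega)] at hcc
          rw [hBlow i (by omega)]
          exact hbzc i hcc
        · rw [hBhigh (i + 1) (by omega)] at hcc
          rw [hBhigh i (by omega)]
          exact hch_c i hcc
  · intro i hi
    rw [hBhigh i (by omega)]
    exact hnch i (by omega)
  · have hpt : ∀ i, B (i + 1) * q i =
        bz (i + 1) * q i + ((if i = κ then j * q i else 0) + ch (i + 1) * q i) := by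
      intro i
      rcases Nat.lt_trichotomy i κ with h | rfl | h
      · rw [hBlow i h, if_neg (by omega), hch_low i (by omega)]
        ring
      · rw [hBat, if_pos rfl, hbz_hi i (le_refl i), hch_low i (le_refl i)]
        ring
      · rw [hBhigh i h, if_neg (by omega), hbz_hi i (by omega)]
        ring
    calc ∑ᶠ i, B (i + 1) * q i
        = ∑ᶠ i, (bz (i + 1) * q i + ((if i = κ then j * q i else 0) + ch (i + 1) * q i)) :=
          finsum_congr hpt
      _ = z + (j * q κ + t) := by
          rw [finsum_add3 (supp_fin ha hq0 hq1 hq bz κ hbz_hi)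
            (delta_supp_fin κ (fun i => j * q i)) (supp_fin ha hq0 hq1 hq ch nch hnch)]
          rw [hbz_sum, hch_sum, finsum_delta κ (fun i => j * q i)]
      _ = z + j * q κ + t := by ring

end glue

/-- the semantic content of the defining formula -/
def Psi (V : ℕ → ℕ) (j x y : ℕ) : Prop :=
  ∃ w, (∃ s, V s = w) ∧ (∃ s, V s = x) ∧ x < w ∧
    (¬ ∃ u, (∃ s, V s = u) ∧ x < u ∧ u < w) ∧
    ((∃ z t, z < x ∧ z + j * x < w ∧ x < V t ∧ V (x + t) = x ∧ y = z + j * x + t) ∨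
     (∃ z, z < x ∧ y < w ∧ y = z + j * x))

section main
variable {a q V : ℕ → ℕ}
variable (ha : ∀ k, 1 ≤ a (k + 1)) (hq0 : q 0 = 1) (hq1 : q 1 = a 1)
  (hq : ∀ k, q (k + 2) = a (k + 2) * q (k + 1) + q k)
  (hV0 : V 0 = 1)
  (hV : ∀ N b k, IsOstRep a q b N → 0 < b (k + 1) → (∀ i, i < k → b (i + 1) = 0) →
      V N = q k)
include ha hq0 hq1 hq hV0 hV

lemma pick_kappa (x : ℕ) (k0 : ℕ) (hk0 : q k0 = x) : ∃ κ, q κ = x ∧ x < q (κ + 1) := by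
  rcases Nat.lt_or_ge x (q (k0 + 1)) with h | h
  · exact ⟨k0, hk0, h⟩
  · have h1 : q (k0 + 1) = x := le_antisymm h (hk0 ▸ q_le_succ ha hq0 hq1 hq k0)
    refine ⟨k0 + 1, h1, ?_⟩
    have h2 := hq k0
    have h3 := ha (k0 + 1)
    have h4 := q_pos ha hq0 hq1 hq k0
    have h5 := q_pos ha hq0 hq1 hq (k0 + 1)
    rw [show k0 + 1 + 1 = k0 + 2 from rfl, h2]
    nlinarith

lemma backward (j x y : ℕ) (hj : 1 ≤ j) (hpsi : Psi V j x y) :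
    ∃ k b, x = q k ∧ IsOstRep a q b y ∧ b (k + 1) = j := by
  obtain ⟨w, ⟨sw, hsw⟩, ⟨sx, hsx⟩, hxw, hnb, hcases⟩ := hpsi
  obtain ⟨k0, hk0⟩ := V_mem_range ha hq0 hq1 hq hV0 hV sx
  obtain ⟨κ, hκ, hκ2⟩ := pick_kappa ha hq0 hq1 hq hV0 hV x k0 (by rw [← hk0, hsx])
  have hxpos : 1 ≤ x := hκ ▸ q_pos ha hq0 hq1 hq κ
  -- identify w with q (κ + 1)
  have hwge : w ≤ q (κ + 1) := by
    by_contra hcon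
    push_neg at hcon
    refine hnb ⟨q (κ + 1), ?_, hκ ▸ hκ2, hcon⟩
    exact (range_V_iff ha hq0 hq1 hq hV0 hV _).mpr ⟨κ + 1, rfl⟩
  have hwle : q (κ + 1) ≤ w := by
    obtain ⟨mw, hmw⟩ := V_mem_range ha hq0 hq1 hq hV0 hV sw
    have hw' : w = q mw := by rw [← hsw, hmw]
    have hmwκ : κ + 1 ≤ mw := by
      by_contra hcon
      push_neg at hcon
      have : q mw ≤ q κ := q_mono ha hq0 hq1 hq (by omega)
      rw [← hw', hκ] at this
      omega
    rw [hw']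
    exact q_mono ha hq0 hq1 hq hmwκ
  have hw : w = q (κ + 1) := le_antisymm hwge hwle
  -- a trivial "high string" for the no-high-part case
  have hch0 : ∀ P : Prop, (∀ i : ℕ, (0:ℕ) = a (i + 2) → P) → True := fun _ _ => trivial
  rcases hcases with ⟨z, t, hzx, hzjw, hvt, hvxt, hyz⟩ | ⟨z, hzx, hyw, hyz⟩
  · -- case with a high part
    have ht : 1 ≤ t := by
      rcases Nat.eq_zero_or_pos t with rfl | h
      · rw [hV0] at hvt; omega
      · exact h
    obtain ⟨c, hcrep, hcsupp⟩ := exists_isOstRep ha hq0 hq1 hq (x + t)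
    obtain ⟨mc, hmc1, hmc2⟩ := least_digit ha hq0 hq1 hq hcrep (by omega)
    have hVxt : V (x + t) = q mc := hV (x + t) c mc hcrep (by omega) hmc2
    have hqmc : q mc = x := by rw [← hVxt, hvxt]
    have hmcκ : mc = κ := by
      rcases Nat.eq_zero_or_pos κ with hκ0 | hκpos
      · -- x = 1 and q 1 ≥ 2
        by_contra hcon
        have hmc1' : 1 ≤ mc := by omega
        have h1 : q 1 ≤ q mc := q_mono ha hq0 hq1 hq hmc1'
        have h2 : q (0 + 1) = q 1 := rfl
        rw [hκ0] at hκ2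
        rw [h2] at hκ2
        rw [hκ0, hq0] at hκ
        omega
      · have hmcpos : 1 ≤ mc := by
          by_contra hcon
          push_neg at hcon
          have hmc0 : mc = 0 := by omega
          have hx1 : x = 1 := by rw [← hqmc, hmc0, hq0]
          have hqκ1 : q 1 ≤ q κ := q_mono ha hq0 hq1 hq hκpos
          have ha1 : a 1 = 1 := by
            have := q_pos ha hq0 hq1 hq 1
            rw [hκ, hx1] at hqκ1
            rw [hq1] at hqκ1 this
            omega
          have hc1 : c 1 < a 1 := hcrep.2.2.1
          rw [ha1] at hc1
          rw [hmc0] at hmc1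
          have : c (0 + 1) = c 1 := rfl
          omega
        rcases Nat.lt_trichotomy mc κ with h | h | h
        · exfalso
          obtain ⟨m, hm⟩ := Nat.exists_eq_add_of_le hmcpos
          have hstep : q mc < q (mc + 1) := by
            rw [show mc = m + 1 from by omega]
            exact q_succ_lt ha hq0 hq1 hq m
          have : q (mc + 1) ≤ q κ := q_mono ha hq0 hq1 hq (by omega)
          rw [hκ] at this
          omega
        · exact h
        · exfalso
          have : q (κ + 1) ≤ q mc := q_mono ha hq0 hq1 hq (by omega)
          omega
    subst hmcκ
    have hcκ : 1 ≤ c (mc + 1) := by omega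
    set c' : ℕ → ℕ := fun i => if i = mc + 1 then c (mc + 1) - 1 else c i with hc'
    have hc'app : ∀ i, c' i = if i = mc + 1 then c (mc + 1) - 1 else c i := fun _ => rfl
    obtain ⟨hc0, hc1, hcle, hcc⟩ := isOstRep_valid ha hq0 hq1 hq hcrep
    obtain ⟨nc, hnc⟩ := isOstRep_supp ha hq0 hq1 hq hcrep
    have hc'supp : ∀ i, max nc (mc + 2) ≤ i → c' (i + 1) = 0 := by
      intro i hi
      rw [hc'app, if_neg (by omega)]
      exact hnc i (by omega)
    have hctop : c (mc + 2) ≠ a (mc + 2) := fun h => by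
      have := hcc mc h
      omega
    have hc'sum : ∑ᶠ i, c' (i + 1) * q i = t := by
      have hpt : ∀ i, c (i + 1) * q i = c' (i + 1) * q i + (if i = mc then q i else 0) := by
        intro i
        rcases eq_or_ne i mc with rfl | h
        · rw [hc'app, if_pos rfl, if_pos rfl]
          obtain ⟨m, hm⟩ : ∃ m, c (i + 1) = m + 1 := ⟨c (i + 1) - 1, by omega⟩
          rw [hm, Nat.add_sub_cancel]
          ring
        · rw [hc'app, if_neg (by omega), if_neg h]
          ring
      have hsum := hcrep.2.2.2.2.2
      rw [finsum_congr hpt] at hsum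
      rw [finsum_add_distrib (supp_fin ha hq0 hq1 hq c' (max nc (mc + 2)) hc'supp)
        (delta_supp_fin mc q)] at hsum
      rw [finsum_delta mc q, hqmc] at hsum
      omega
    have hc'valid : ValidStr a c' := by
      refine ⟨by rw [hc'app, if_neg (by omega)]; exact hc0, ?_, ?_, ?_⟩
      · rcases eq_or_ne (0 : ℕ) mc with h | h
        · rw [hc'app, if_pos (by omega)]
          have : c (0 + 1) = c 1 := rfl
          rw [← h]
          omega
        · rw [hc'app, if_neg (by omega)]
          exact hc1
      · intro i
        rcases eq_or_ne i mc with rfl | h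
        · rw [hc'app, if_pos rfl]
          have := hcle i
          omega
        · rw [hc'app, if_neg (by omega)]
          exact hcle i
      · intro i hcc2
        rcases eq_or_ne (i + 1) (mc + 1) with h | h
        · exfalso
          rw [hc'app, if_neg (by omega)] at hcc2
          have : i + 2 = mc + 2 := by omega
          rw [this] at hcc2
          exact hctop hcc2
        · rcases eq_or_ne (i + 2) (mc + 1) with h2 | h2
          · rw [hc'app, if_neg h]
            exact hmc2 i (by omega)
          · rw [hc'app, if_neg h2] at hcc2
            rw [hc'app, if_neg h]
            exact hcc i hcc2
    -- the top digit of c at mc must be exactly 1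
    have hcmc1 : c (mc + 1) = 1 := by
      by_contra hcon
      have h2 : 2 ≤ c (mc + 1) := by omega
      have hrep' : IsOstRep a q c' t :=
        mk_isOstRep ha hq0 hq1 hq c' t hc'valid _ hc'supp hc'sum
      have hVt : V t = q mc := by
        refine hV t c' mc hrep' ?_ ?_
        · rw [hc'app, if_pos rfl]; omega
        · intro i hi
          rw [hc'app, if_neg (by omega)]
          exact hmc2 i hi
      rw [hVt, hqmc] at hvt
      omega
    have hc'low : ∀ i, i ≤ mc → c' (i + 1) = 0 := by
      intro i hi
      rcases eq_or_ne i mc with rfl | h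
      · rw [hc'app, if_pos rfl, hcmc1]
      · rw [hc'app, if_neg (by omega)]
        exact hmc2 i (by omega)
    have hc'top : c' (mc + 2) ≠ a (mc + 2) := by
      rw [hc'app, if_neg (by omega)]
      exact hctop
    -- low part
    obtain ⟨bz, hbzrep, hbzsupp⟩ := exists_isOstRep ha hq0 hq1 hq z
    have hzx' : z < q mc := by rw [hqmc]; exact hzx
    have hzj' : z + j * q mc < q (mc + 1) := by rw [hqmc, ← hw]; exact hzjw
    have hglue := glue ha hq0 hq1 hq mc j z t hj bz c'
      (isOstRep_valid ha hq0 hq1 hq hbzrep) hbzsupp hbzrep.2.2.2.2.2 hzx' hzj'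
      hc'low hc'valid.2.2.1 hc'valid.2.2.2 hc'top ⟨max nc (mc + 2), hc'supp⟩ hc'sum
    refine ⟨mc, (fun i => if i = mc + 1 then j else if i ≤ mc then bz i else c' i),
      hqmc.symm, ?_, ?_⟩
    · rw [hyz, ← hqmc]
      exact hglue
    · show (if mc + 1 = mc + 1 then j else _) = j
      rw [if_pos rfl]
  · -- no high part
    obtain ⟨bz, hbzrep, hbzsupp⟩ := exists_isOstRep ha hq0 hq1 hq z
    have hzx' : z < q κ := by rw [hκ]; exact hzx
    have hzj' : z + j * q κ < q (κ + 1) := by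
      rw [hκ, ← hw, ← hyz]
      exact hyw
    have hglue := glue ha hq0 hq1 hq κ j z 0 hj bz (fun _ => 0)
      (isOstRep_valid ha hq0 hq1 hq hbzrep) hbzsupp hbzrep.2.2.2.2.2 hzx' hzj'
      (fun _ _ => rfl) (fun _ => Nat.zero_le _)
      (fun k hk => absurd (show a (k + 2) = 0 from hk.symm)
        (by have := ha (k + 1); rw [show k+1+1 = k+2 from rfl] at this; omega))
      (by intro hcontra
          have h0 : (0 : ℕ) = a (κ + 2) := hcontra
          have := ha (κ + 1)
          rw [show κ+1+1 = κ+2 from rfl] at this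
          omega)
      ⟨0, fun _ _ => rfl⟩ (by simp)
    refine ⟨κ, (fun i => if i = κ + 1 then j else if i ≤ κ then bz i else 0),
      hκ.symm, ?_, ?_⟩
    · rw [hyz, ← hκ]
      have h00 : z + j * q κ + 0 = z + j * q κ := by ring
      rw [← h00]
      exact hglue
    · show (if κ + 1 = κ + 1 then j else _) = j
      rw [if_pos rfl]

lemma forward (j x y k : ℕ) (hj : 1 ≤ j) (b : ℕ → ℕ) (hx : x = q k)
    (hrep : IsOstRep a q b y) (hbj : b (k + 1) = j) : Psi V j x y := by
  obtain ⟨hb0, hb1, hble, hbc⟩ := isOstRep_valid ha hq0 hq1 hq hrep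
  obtain ⟨n0, hn0⟩ := isOstRep_supp ha hq0 hq1 hq hrep
  set n := max n0 (k + 2) with hn
  have hsupp : ∀ i, n ≤ i → b (i + 1) = 0 := fun i hi => hn0 i (by omega)
  have hkn : k + 2 ≤ n := by omega
  have ha1 : k = 0 → 2 ≤ a 1 := by
    intro h
    subst h
    have : b (0 + 1) = b 1 := rfl
    omega
  have hxw : q k < q (k + 1) := by
    match k with
    | 0 =>
      have h1 : q (0 + 1) = a 1 := hq1
      rw [hq0, h1]
      exact ha1 rfl
    | (m + 1) => exact q_succ_lt ha hq0 hq1 hq m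
  refine ⟨q (k + 1), ⟨q (k + 1), V_qk ha hq0 hq1 hq hV0 hV (k + 1) (by omega)⟩,
    (range_V_iff ha hq0 hq1 hq hV0 hV x).mpr ⟨k, hx.symm⟩, hx ▸ hxw, ?_, ?_⟩
  · rintro ⟨u, ⟨s, hsu⟩, hu1, hu2⟩
    obtain ⟨m, hm⟩ := V_mem_range ha hq0 hq1 hq hV0 hV s
    rw [hsu] at hm
    rcases le_or_gt m k with h | h
    · have h3 : q m ≤ q k := q_mono ha hq0 hq1 hq h
      rw [← hm] at h3
      omega
    · have h3 : q (k + 1) ≤ q m := q_mono ha hq0 hq1 hq h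
      rw [← hm] at h3
      omega
  · -- main disjunction
    set bz : ℕ → ℕ := fun i => if i ≤ k then b i else 0 with hbzdef
    set bt : ℕ → ℕ := fun i => if i ≤ k + 1 then 0 else b i with hbtdef
    have hbzapp : ∀ i, bz i = if i ≤ k then b i else 0 := fun _ => rfl
    have hbtapp : ∀ i, bt i = if i ≤ k + 1 then 0 else b i := fun _ => rfl
    set z := ∑ᶠ i, bz (i + 1) * q i with hzdef
    set t := ∑ᶠ i, bt (i + 1) * q i with htdef
    have hbz_hi : ∀ i, k ≤ i → bz (i + 1) = 0 := by
      intro i hi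
      rw [hbzapp, if_neg (by omega)]
    have hbt_low : ∀ i, i ≤ k → bt (i + 1) = 0 := by
      intro i hi
      rw [hbtapp, if_pos (by omega)]
    have hbt_hi : ∀ i, n ≤ i → bt (i + 1) = 0 := by
      intro i hi
      rw [hbtapp]
      rcases le_or_gt (i + 1) (k + 1) with h | h
      · rw [if_pos h]
      · rw [if_neg (by omega)]
        exact hsupp i hi
    have hsplit : y = z + (j * q k + t) := by
      have hpt : ∀ i, b (i + 1) * q i =
          bz (i + 1) * q i + ((if i = k then j * q i else 0) + bt (i + 1) * q i) := by
        intro i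
        rcases Nat.lt_trichotomy i k with h | rfl | h
        · rw [hbzapp, if_pos (by omega), if_neg (by omega), hbt_low i (by omega)]
          ring
        · rw [hbz_hi i (le_refl i), if_pos rfl, hbt_low i (le_refl i), hbj]
          ring
        · rw [hbz_hi i (by omega), if_neg (by omega), hbtapp, if_neg (by omega)]
          ring
      have hsum := hrep.2.2.2.2.2
      rw [finsum_congr hpt] at hsum
      rw [finsum_add3 (supp_fin ha hq0 hq1 hq bz k hbz_hi)
        (delta_supp_fin k (fun i => j * q i)) (supp_fin ha hq0 hq1 hq bt n hbt_hi)] at hsum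
      rw [finsum_delta k (fun i => j * q i)] at hsum
      exact hsum.symm
    have hbzv : ValidStr a bz := by
      refine ⟨by rw [hbzapp, if_pos (Nat.zero_le k)]; exact hb0, ?_, ?_, ?_⟩
      · rw [hbzapp]
        rcases le_or_gt 1 k with h | h
        · rw [if_pos h]; exact hb1
        · rw [if_neg (by omega)]
          have := ha 0
          omega
      · intro i
        rw [hbzapp]
        rcases le_or_gt (i + 1) k with h | h
        · rw [if_pos h]; exact hble i
        · rw [if_neg (by omega)]; exact Nat.zero_le _
      · intro i hcc
        rcases le_or_gt (i + 2) k with h | h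
        · rw [hbzapp, if_pos h] at hcc
          rw [hbzapp, if_pos (by omega)]
          exact hbc i hcc
        · exfalso
          rw [hbzapp, if_neg (by omega)] at hcc
          have := ha (i + 1)
          rw [show i + 1 + 1 = i + 2 from rfl] at this
          omega
    have hz_lt : z < q k := by
      rw [hzdef, finsum_eq_range ha hq0 hq1 hq bz k hbz_hi]
      exact sum_lt ha hq0 hq1 hq bz hbzv k
    -- the augmented low string with digit j at position k
    set bzj : ℕ → ℕ := fun i => if i = k + 1 then j else bz i with hbzjdef
    have hbzjapp : ∀ i, bzj i = if i = k + 1 then j else bz i := fun _ => rfl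
    have hbzjv : ValidStr a bzj := by
      refine ⟨by rw [hbzjapp, if_neg (by omega)]; exact hbzv.1, ?_, ?_, ?_⟩
      · rcases Nat.eq_zero_or_pos k with hk0 | hkpos
        · rw [hbzjapp, if_pos (by omega)]
          subst hk0
          have : b (0 + 1) = b 1 := rfl
          omega
        · rw [hbzjapp, if_neg (by omega)]
          exact hbzv.2.1
      · intro i
        rcases eq_or_ne i k with rfl | h
        · rw [hbzjapp, if_pos rfl, ← hbj]
          exact hble i
        · rw [hbzjapp, if_neg (by omega)]
          exact hbzv.2.2.1 i
      · intro i hcc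
        rcases eq_or_ne (i + 2) (k + 1) with h2 | h2
        · rw [hbzjapp, if_pos h2] at hcc
          have hcc' : b (i + 2) = a (i + 2) := by
            rw [h2] at hcc
            rw [h2, hbj]
            exact hcc
          have h0 := hbc i hcc'
          rw [hbzjapp, if_neg (by omega), hbzapp, if_pos (by omega)]
          exact h0
        · rcases eq_or_ne (i + 1) (k + 1) with h1 | h1
          · exfalso
            rw [hbzjapp, if_neg h2] at hcc
            rw [hbzapp, if_neg (by omega)] at hcc
            have := ha (i + 1)
            rw [show i + 1 + 1 = i + 2 from rfl] at this
            omega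
          · rw [hbzjapp, if_neg h2] at hcc
            rw [hbzjapp, if_neg h1]
            exact hbzv.2.2.2 i hcc
    have hzj_lt : z + j * q k < q (k + 1) := by
      have hs1 : ∑ i ∈ Finset.range (k + 1), bzj (i + 1) * q i = z + j * q k := by
        rw [Finset.sum_range_succ]
        have h1 : ∀ i ∈ Finset.range k, bzj (i + 1) * q i = bz (i + 1) * q i := by
          intro i hi
          rw [Finset.mem_range] at hi
          rw [hbzjapp, if_neg (by omega)]
        rw [Finset.sum_congr rfl h1, hbzjapp, if_pos rfl]
        rw [hzdef, finsum_eq_range ha hq0 hq1 hq bz k hbz_hi]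
      rw [← hs1]
      exact sum_lt ha hq0 hq1 hq bzj hbzjv (k + 1)
    rcases Nat.eq_zero_or_pos t with ht0 | htpos
    · right
      refine ⟨z, hx ▸ hz_lt, ?_, ?_⟩
      · rw [hsplit, ht0]
        omega
      · rw [hsplit, ht0, hx]
        omega
    · left
      have hbtv : ValidStr a bt := by
        refine ⟨by rw [hbtapp, if_pos (by omega)], by rw [hbtapp, if_pos (by omega)]; exact ha 0, ?_, ?_⟩
        · intro i
          rw [hbtapp]
          rcases le_or_gt (i + 1) (k + 1) with h | h
          · rw [if_pos h]; exact Nat.zero_le _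
          · rw [if_neg (by omega)]; exact hble i
        · intro i hcc
          rcases le_or_gt (i + 2) (k + 1) with h | h
          · exfalso
            rw [hbtapp, if_pos h] at hcc
            have := ha (i + 1)
            rw [show i + 1 + 1 = i + 2 from rfl] at this
            omega
          · rw [hbtapp, if_neg (by omega)] at hcc
            have := hbc i hcc
            rw [hbtapp]
            rcases le_or_gt (i + 1) (k + 1) with h' | h'
            · rw [if_pos h']
            · rw [if_neg (by omega)]
              exact this
      have hbtrep : IsOstRep a q bt t :=
        mk_isOstRep ha hq0 hq1 hq bt t hbtv n hbt_hi rfl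
      obtain ⟨mt, hmt1, hmt2⟩ := least_digit ha hq0 hq1 hq hbtrep htpos
      have hmtk : k + 1 ≤ mt := by
        by_contra hcon
        exact hmt1 (hbt_low mt (by omega))
      have hVt : V t = q mt := hV t bt mt hbtrep (by omega) hmt2
      set bxt : ℕ → ℕ := fun i => if i = k + 1 then 1 else bt i with hbxtdef
      have hbxtapp : ∀ i, bxt i = if i = k + 1 then 1 else bt i := fun _ => rfl
      have hbxtv : ValidStr a bxt := by
        refine ⟨by rw [hbxtapp, if_neg (by omega)]; exact hbtv.1, ?_, ?_, ?_⟩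
        · rcases Nat.eq_zero_or_pos k with hk0 | hkpos
          · rw [hbxtapp, if_pos (by omega)]
            have := ha1 hk0
            omega
          · rw [hbxtapp, if_neg (by omega)]
            exact hbtv.2.1
        · intro i
          rcases eq_or_ne (i + 1) (k + 1) with h | h
          · rw [hbxtapp, if_pos h]
            have := ha i
            omega
          · rw [hbxtapp, if_neg h]
            exact hbtv.2.2.1 i
        · intro i hcc
          rcases eq_or_ne (i + 1) (k + 1) with h1 | h1
          · exfalso
            have hik : i = k := by omega
            rw [hbxtapp, if_neg (by omega), hbtapp, if_neg (by omega)] at hcc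
            subst hik
            have hj0 := hbc i hcc
            omega
          · rcases eq_or_ne (i + 2) (k + 1) with h2 | h2
            · rw [hbxtapp, if_neg h1]
              exact hbt_low i (by omega)
            · rw [hbxtapp, if_neg h2] at hcc
              rw [hbxtapp, if_neg h1]
              exact hbtv.2.2.2 i hcc
      have hbxt_sum : ∑ᶠ i, bxt (i + 1) * q i = x + t := by
        have hpt2 : ∀ i, bxt (i + 1) * q i =
            (if i = k then q i else 0) + bt (i + 1) * q i := by
          intro i
          rcases eq_or_ne i k with rfl | h
          · rw [hbxtapp, if_pos rfl, if_pos rfl, hbt_low i (le_refl i)]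
            ring
          · rw [hbxtapp, if_neg (by omega), if_neg h]
            ring
        rw [finsum_congr hpt2]
        rw [finsum_add_distrib (delta_supp_fin k q) (supp_fin ha hq0 hq1 hq bt n hbt_hi)]
        rw [finsum_delta k q, ← htdef, hx]
      have hbxt_hi : ∀ i, n ≤ i → bxt (i + 1) = 0 := by
        intro i hi
        rw [hbxtapp, if_neg (by omega)]
        exact hbt_hi i hi
      have hbxtrep : IsOstRep a q bxt (x + t) :=
        mk_isOstRep ha hq0 hq1 hq bxt (x + t) hbxtv n hbxt_hi hbxt_sum
      have hVxt : V (x + t) = q k := by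
        refine hV (x + t) bxt k hbxtrep ?_ ?_
        · rw [hbxtapp, if_pos rfl]
          omega
        · intro i hi
          rw [hbxtapp, if_neg (by omega)]
          exact hbt_low i (by omega)
      refine ⟨z, t, hx ▸ hz_lt, ?_, ?_, ?_, ?_⟩
      · rw [hx]; exact hzj_lt
      · rw [hVt, hx]
        calc q k < q (k + 1) := hxw
          _ ≤ q mt := q_mono ha hq0 hq1 hq hmtk
      · rw [hVxt, hx]
      · rw [hsplit, hx]
        ring

end main

end OstAux


namespace OstForm
open FirstOrder Language OstAux

variable {β : Type*}

def tA (t₁ t₂ : addVLanguage.Term β) : addVLanguage.Term β :=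
  Term.func (l := 2) () ![t₁, t₂]

def tF (t : addVLanguage.Term β) : addVLanguage.Term β :=
  Term.func (l := 1) () ![t]

def tMul : ℕ → addVLanguage.Term β → addVLanguage.Term β
  | 0, t => t
  | (n + 1), t => tA (tMul n t) t

section realize
variable (V : ℕ → ℕ)

lemma realize_tA (v : β → ℕ) (t₁ t₂ : addVLanguage.Term β) :
    @Term.realize addVLanguage ℕ (addVStructure V) β v (tA t₁ t₂) =
      @Term.realize addVLanguage ℕ (addVStructure V) β v t₁ +
      @Term.realize addVLanguage ℕ (addVStructure V) β v t₂ := rfl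

lemma realize_tF (v : β → ℕ) (t : addVLanguage.Term β) :
    @Term.realize addVLanguage ℕ (addVStructure V) β v (tF t) =
      V (@Term.realize addVLanguage ℕ (addVStructure V) β v t) := rfl

lemma realize_tMul (v : β → ℕ) (n : ℕ) (t : addVLanguage.Term β) :
    @Term.realize addVLanguage ℕ (addVStructure V) β v (tMul n t) =
      (n + 1) * @Term.realize addVLanguage ℕ (addVStructure V) β v t := by
  induction n with
  | zero => rw [tMul]; ring_nf
  | succ m ih =>
    rw [tMul, realize_tA, ih]
    ring

end realize

-- variable layout: outer witnesses i : Fin 10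
-- 0:o, 1:w, 2:z, 3:t, 4:sx, 5:sw, 6:e1, 7:e2, 8:e3, 9:e4
section formula

abbrev B2 := Fin 2 ⊕ Fin 10

def X : addVLanguage.Term B2 := Term.var (Sum.inl 0)
def Y : addVLanguage.Term B2 := Term.var (Sum.inl 1)
def Wt (i : Fin 10) : addVLanguage.Term B2 := Term.var (Sum.inr i)
def one : addVLanguage.Term B2 := tF (Wt 0)

/-- `t₁ < t₂` via explicit witness term `e`: `t₁ + 1 + e = t₂`. -/
def ltW (t₁ e t₂ : addVLanguage.Term B2) : addVLanguage.Formula B2 :=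
  Term.equal (tA (tA t₁ one) e) t₂

def jx (j : ℕ) : addVLanguage.Term B2 := tMul (j - 1) X
def zjx (j : ℕ) : addVLanguage.Term B2 := tA (Wt 2) (jx j)

/-- inner formula for "no element of range V strictly between x and w";
inner vars : Fin 4 : 0:u, 1:s, 2:f1, 3:f2 -/
def nbInner : addVLanguage.Formula (B2 ⊕ Fin 4) :=
  (Term.equal (tF (Term.var (Sum.inr 1))) (Term.var (Sum.inr 0))) ⊓
  (Term.equal
    (tA (tA (Term.var (Sum.inl (Sum.inl 0))) (tF (Term.var (Sum.inl (Sum.inr 0)))))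
      (Term.var (Sum.inr 2)))
    (Term.var (Sum.inr 0))) ⊓
  (Term.equal
    (tA (tA (Term.var (Sum.inr 0)) (tF (Term.var (Sum.inl (Sum.inr 0)))))
      (Term.var (Sum.inr 3)))
    (Term.var (Sum.inl (Sum.inr 1))))

noncomputable def nb : addVLanguage.Formula B2 :=
  (Formula.iExs (Fin 4) nbInner).not

noncomputable def body (j : ℕ) : addVLanguage.Formula B2 :=
  (Term.equal (tA (Wt 0) (Wt 0)) (Wt 0)) ⊓
  (Term.equal (tF (Wt 4)) X) ⊓
  (Term.equal (tF (Wt 5)) (Wt 1)) ⊓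
  (ltW X (Wt 6) (Wt 1)) ⊓
  nb ⊓
  (((ltW (Wt 2) (Wt 7) X) ⊓
    (ltW (zjx j) (Wt 8) (Wt 1)) ⊓
    (ltW X (Wt 9) (tF (Wt 3))) ⊓
    (Term.equal (tF (tA X (Wt 3))) X) ⊓
    (Term.equal Y (tA (zjx j) (Wt 3)))) ⊔
   ((ltW (Wt 2) (Wt 7) X) ⊓
    (ltW Y (Wt 8) (Wt 1)) ⊓
    (Term.equal Y (zjx j))))

noncomputable def phiF (j : ℕ) : addVLanguage.Formula (Fin 2) :=
  Formula.iExs (Fin 10) (body j)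

end formula

lemma realize_phiF (V : ℕ → ℕ) (hV0 : V 0 = 1) (j : ℕ) (hj : 1 ≤ j) (v : Fin 2 → ℕ) :
    @Formula.Realize addVLanguage ℕ (addVStructure V) (Fin 2) (phiF j) v ↔
      Psi V j (v 0) (v 1) := by
  letI := addVStructure V
  have hjx : j - 1 + 1 = j := by omega
  rw [phiF, Formula.realize_iExs]
  simp only [body, nb, nbInner, ltW, zjx, jx, X, Y, Wt, one,
    Formula.realize_inf, Formula.realize_sup, Formula.realize_not, Formula.realize_iExs,
    Formula.realize_equal, realize_tA, realize_tF, realize_tMul, Term.realize_var,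
    id_eq, Sum.elim_inl, Sum.elim_inr, hjx]
  constructor
  · rintro ⟨i, ⟨⟨⟨⟨ho, hsx⟩, hsw⟩, he1⟩, hnb⟩, hD⟩
    have ho0 : i 0 = 0 := by omega
    rw [ho0, hV0] at he1 hnb hD
    refine ⟨i 1, ⟨i 5, hsw⟩, ⟨i 4, hsx⟩, by omega, ?_, ?_⟩
    · rintro ⟨u, ⟨s, hs⟩, hu1, hu2⟩
      exact hnb ⟨![u, s, u - v 0 - 1, i 1 - u - 1],
        ⟨hs, show v 0 + 1 + (u - v 0 - 1) = u from by omega⟩,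
        show u + 1 + (i 1 - u - 1) = i 1 from by omega⟩
    · rcases hD with ⟨⟨⟨⟨h1, h2⟩, h3⟩, h4⟩, h5⟩ | ⟨⟨h1, h2⟩, h3⟩
      · exact Or.inl ⟨i 2, i 3, by omega, by omega, by omega, h4, h5⟩
      · exact Or.inr ⟨i 2, by omega, by omega, h3⟩
  · rintro ⟨w, ⟨sw, hsw⟩, ⟨sx, hsx⟩, hxw, hnb, hD⟩
    have hNB : ¬∃ ii : Fin 4 → ℕ,
        (V (ii 1) = ii 0 ∧ v 0 + V 0 + ii 2 = ii 0) ∧ ii 0 + V 0 + ii 3 = w := by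
      rintro ⟨ii, ⟨hA, hB⟩, hC⟩
      rw [hV0] at hB hC
      exact hnb ⟨ii 0, ⟨ii 1, hA⟩, by omega, by omega⟩
    rcases hD with ⟨z, t, h1, h2, h3, h4, h5⟩ | ⟨z, h1, h2, h3⟩
    · have hbig : ((((0 + 0 = 0 ∧ V sx = v 0) ∧ V sw = w) ∧
          v 0 + V 0 + (w - v 0 - 1) = w) ∧
          ¬∃ ii : Fin 4 → ℕ,
            (V (ii 1) = ii 0 ∧ v 0 + V 0 + ii 2 = ii 0) ∧ ii 0 + V 0 + ii 3 = w) ∧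
          (((((z + V 0 + (v 0 - z - 1) = v 0 ∧
              z + j * v 0 + V 0 + (w - (z + j * v 0) - 1) = w) ∧
              v 0 + V 0 + (V t - v 0 - 1) = V t) ∧
              V (v 0 + t) = v 0) ∧
              v 1 = z + j * v 0 + t) ∨
           ((z + V 0 + (v 0 - z - 1) = v 0 ∧ v 1 + V 0 + (w - (z + j * v 0) - 1) = w) ∧
              v 1 = z + j * v 0)) :=
        ⟨⟨⟨⟨⟨rfl, hsx⟩, hsw⟩, by omega⟩, hNB⟩,
          Or.inl ⟨⟨⟨⟨by omega, by omega⟩, by omega⟩, h4⟩, h5⟩⟩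
      exact ⟨![0, w, z, t, sx, sw, w - v 0 - 1, v 0 - z - 1, w - (z + j * v 0) - 1,
        V t - v 0 - 1], hbig⟩
    · have hbig : ((((0 + 0 = 0 ∧ V sx = v 0) ∧ V sw = w) ∧
          v 0 + V 0 + (w - v 0 - 1) = w) ∧
          ¬∃ ii : Fin 4 → ℕ,
            (V (ii 1) = ii 0 ∧ v 0 + V 0 + ii 2 = ii 0) ∧ ii 0 + V 0 + ii 3 = w) ∧
          (((((z + V 0 + (v 0 - z - 1) = v 0 ∧
              z + j * v 0 + V 0 + (w - v 1 - 1) = w) ∧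
              v 0 + V 0 + 0 = V 0) ∧
              V (v 0 + 0) = v 0) ∧
              v 1 = z + j * v 0 + 0) ∨
           ((z + V 0 + (v 0 - z - 1) = v 0 ∧ v 1 + V 0 + (w - v 1 - 1) = w) ∧
              v 1 = z + j * v 0)) :=
        ⟨⟨⟨⟨⟨rfl, hsx⟩, hsw⟩, by omega⟩, hNB⟩,
          Or.inr ⟨⟨by omega, by omega⟩, h3⟩⟩
      exact ⟨![0, w, z, 0, sx, sw, w - v 0 - 1, v 0 - z - 1, w - v 1 - 1, 0], hbig⟩

end OstForm


/-- Let `a` be a quadratic irrational (i.e. with eventually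
periodic continued fraction digits `(a_k)`, all positive and bounded by `μ ≤ c`),
`q` the denominators of its convergents, and `V : ℕ → ℕ` the function sending
`x ≥ 1` to the least `q_k` occurring with nonzero coefficient in the Ostrowski
representation of `x` (and `V 0 = 1`). Then for each `j` with `1 ≤ j ≤ 2c + 1`,
the relation `ε_j(x, y)`, asserting that `x = q_k` for some `k` and that the
coefficient of `q_k` in the Ostrowski representation of `y` equals `j`, is
first-order definable (without parameters) in the structure `(ℕ, +, V_a)`. -/
theorem epsilon_j_definable
    (a q : ℕ → ℕ)
    (ha : ∀ k, 1 ≤ a (k + 1))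
    (hq0 : q 0 = 1) (hq1 : q 1 = a 1)
    (hq : ∀ k, q (k + 2) = a (k + 2) * q (k + 1) + q k)
    (p K : ℕ) (hp : 1 ≤ p) (hper : ∀ k, K ≤ k → a (k + p) = a k)
    (c : ℕ) (hc : ∀ k, a (k + 1) ≤ c)
    (V : ℕ → ℕ)
    (hV0 : V 0 = 1)
    (hV : ∀ N b k, IsOstRep a q b N → 0 < b (k + 1) → (∀ i, i < k → b (i + 1) = 0) →
      V N = q k) :
    ∀ j, 1 ≤ j → j ≤ 2 * c + 1 →
      @Set.Definable ℕ (∅ : Set ℕ) addVLanguage (addVStructure V) (Fin 2)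
        {v : Fin 2 → ℕ | ∃ k b, v 0 = q k ∧ IsOstRep a q b (v 1) ∧ b (k + 1) = j} := by
  intro j hj1 hj2
  letI := addVStructure V
  rw [Set.empty_definable_iff]
  refine ⟨OstForm.phiF j, ?_⟩
  ext v
  simp only [Set.mem_setOf_eq]
  rw [OstForm.realize_phiF V hV0 j hj1 v]
  constructor
  · rintro ⟨k, b, h1, h2, h3⟩
    exact OstAux.forward ha hq0 hq1 hq hV0 hV j (v 0) (v 1) k hj1 b h1 h2 h3
  · intro h
    exact OstAux.backward ha hq0 hq1 hq hV0 hV j (v 0) (v 1) hj1 h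
end
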